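/- arXiv:1208.6475 — 6 statements merged into one kernel-verified Lean document; each statement's English description precedes it below -/
import Mathlib

section
/- Exponential L² decay of the target system (Proposition 3.1, decay part): For every λ > 0 there exists c > 0 such that every classical C¹ solution γ of the target system satisfies ‖γ(·,t)‖_{L²} ≤ c e^{−λ t} ‖γ(·,0)‖_{L²} for all t ≥ 0. -/
open MeasureTheory Set Function

noncomputable section TSAux

def tsCl1 (x : ℝ) : ℝ := max 0 (min x 1)
def tsCl2 (t : ℝ) : ℝ := max 0 t
lemma tsCl1_mem (x : ℝ) : tsCl1 x ∈ Icc (0:ℝ) 1 :=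
  ⟨le_max_left _ _, max_le zero_le_one (min_le_right _ _)⟩
lemma tsCl2_mem (t : ℝ) : tsCl2 t ∈ Ici (0:ℝ) := Set.mem_Ici.2 (le_max_left _ _)
lemma tsCl1_eq {x : ℝ} (hx : x ∈ Icc (0:ℝ) 1) : tsCl1 x = x := by
  simp [tsCl1, min_eq_left hx.2, max_eq_right hx.1]
lemma tsCl2_eq {t : ℝ} (ht : t ∈ Ici (0:ℝ)) : tsCl2 t = t := max_eq_right ht
lemma tsCl1_continuous : Continuous tsCl1 :=
  continuous_const.max (continuous_id.min continuous_const)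
lemma tsCl2_continuous : Continuous tsCl2 := continuous_const.max continuous_id

lemma tsClamp_cont {f : ℝ → ℝ → ℝ}
    (hf : ContinuousOn (uncurry f) (Icc 0 1 ×ˢ Ici 0)) :
    Continuous (fun p : ℝ × ℝ => f (tsCl1 p.1) (tsCl2 p.2)) := by
  have h : Continuous (fun p : ℝ × ℝ => ((tsCl1 p.1, tsCl2 p.2) : ℝ × ℝ)) :=
    (tsCl1_continuous.comp continuous_fst).prodMk (tsCl2_continuous.comp continuous_snd)
  exact hf.comp_continuous h (fun p => mk_mem_prod (tsCl1_mem _) (tsCl2_mem _))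

lemma tsClamp1_cont {f : ℝ → ℝ} (hf : ContinuousOn f (Icc 0 1)) :
    Continuous (fun x : ℝ => f (tsCl1 x)) :=
  hf.comp_continuous tsCl1_continuous (fun x => tsCl1_mem x)

lemma tsS_uniqueDiff : UniqueDiffOn ℝ ((Icc 0 1 ×ˢ Ici 0) : Set (ℝ × ℝ)) :=
  (uniqueDiffOn_Icc zero_lt_one).prod (uniqueDiffOn_Ici 0)

lemma ts_partial_x {α αx : ℝ → ℝ → ℝ}
    (hα : ContDiffOn ℝ 1 (uncurry α) (Icc 0 1 ×ˢ Ici 0))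
    (hαx : ∀ x ∈ Icc (0:ℝ) 1, ∀ t ∈ Ici (0:ℝ),
      HasDerivWithinAt (fun s => α s t) (αx x t) (Icc 0 1) x) :
    ∃ Ax : ℝ × ℝ → ℝ, Continuous Ax ∧
      ∀ x ∈ Icc (0:ℝ) 1, ∀ t ∈ Ici (0:ℝ), Ax (x, t) = αx x t := by
  set S : Set (ℝ × ℝ) := Icc 0 1 ×ˢ Ici 0 with hS
  set L := fderivWithin ℝ (uncurry α) S with hL
  have hLcont : ContinuousOn L S := hα.continuousOn_fderivWithin tsS_uniqueDiff le_rfl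
  refine ⟨fun p => L (tsCl1 p.1, tsCl2 p.2) (1, 0), ?_, ?_⟩
  · have h : Continuous (fun p : ℝ × ℝ => L (tsCl1 p.1, tsCl2 p.2)) := by
      have hcl : Continuous (fun p : ℝ × ℝ => ((tsCl1 p.1, tsCl2 p.2) : ℝ × ℝ)) :=
        (tsCl1_continuous.comp continuous_fst).prodMk (tsCl2_continuous.comp continuous_snd)
      exact hLcont.comp_continuous hcl (fun p => mk_mem_prod (tsCl1_mem _) (tsCl2_mem _))
    exact h.clm_apply continuous_const
  · intro x hx t ht
    have hmem : (x, t) ∈ S := mk_mem_prod hx ht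
    have hF : HasFDerivWithinAt (uncurry α) (L (x, t)) S (x, t) :=
      ((hα.differentiableOn one_ne_zero) (x, t) hmem).hasFDerivWithinAt
    have hcurve : HasDerivWithinAt (fun s : ℝ => ((s, t) : ℝ × ℝ)) ((1 : ℝ), (0 : ℝ))
        (Icc 0 1) x := (HasDerivAt.prodMk (hasDerivAt_id x) (hasDerivAt_const x t)).hasDerivWithinAt
    have hmaps : MapsTo (fun s : ℝ => ((s, t) : ℝ × ℝ)) (Icc 0 1) S :=
      fun s hs => mk_mem_prod hs ht
    have hslice : HasDerivWithinAt (fun s => α s t) (L (x, t) (1, 0)) (Icc 0 1) x :=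
      by have := hF.comp_hasDerivWithinAt x hcurve hmaps; exact this
    have hu : UniqueDiffWithinAt ℝ (Icc (0:ℝ) 1) x := (uniqueDiffOn_Icc zero_lt_one) x hx
    have h1 := hslice.derivWithin hu
    have h2 := (hαx x hx t ht).derivWithin hu
    simp only [tsCl1_eq hx, tsCl2_eq ht]
    rw [← h1, ← h2]

lemma ts_partial_t {α αt : ℝ → ℝ → ℝ}
    (hα : ContDiffOn ℝ 1 (uncurry α) (Icc 0 1 ×ˢ Ici 0))
    (hαt : ∀ x ∈ Icc (0:ℝ) 1, ∀ t ∈ Ici (0:ℝ),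
      HasDerivWithinAt (fun τ => α x τ) (αt x t) (Ici 0) t) :
    ∃ At : ℝ × ℝ → ℝ, Continuous At ∧
      ∀ x ∈ Icc (0:ℝ) 1, ∀ t ∈ Ici (0:ℝ), At (x, t) = αt x t := by
  set S : Set (ℝ × ℝ) := Icc 0 1 ×ˢ Ici 0 with hS
  set L := fderivWithin ℝ (uncurry α) S with hL
  have hLcont : ContinuousOn L S := hα.continuousOn_fderivWithin tsS_uniqueDiff le_rfl
  refine ⟨fun p => L (tsCl1 p.1, tsCl2 p.2) (0, 1), ?_, ?_⟩
  · have h : Continuous (fun p : ℝ × ℝ => L (tsCl1 p.1, tsCl2 p.2)) := by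
      have hcl : Continuous (fun p : ℝ × ℝ => ((tsCl1 p.1, tsCl2 p.2) : ℝ × ℝ)) :=
        (tsCl1_continuous.comp continuous_fst).prodMk (tsCl2_continuous.comp continuous_snd)
      exact hLcont.comp_continuous hcl (fun p => mk_mem_prod (tsCl1_mem _) (tsCl2_mem _))
    exact h.clm_apply continuous_const
  · intro x hx t ht
    have hmem : (x, t) ∈ S := mk_mem_prod hx ht
    have hF : HasFDerivWithinAt (uncurry α) (L (x, t)) S (x, t) :=
      ((hα.differentiableOn one_ne_zero) (x, t) hmem).hasFDerivWithinAt
    have hcurve : HasDerivWithinAt (fun τ : ℝ => ((x, τ) : ℝ × ℝ)) ((0 : ℝ), (1 : ℝ))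
        (Ici 0) t := (HasDerivAt.prodMk (hasDerivAt_const t x) (hasDerivAt_id t)).hasDerivWithinAt
    have hmaps : MapsTo (fun τ : ℝ => ((x, τ) : ℝ × ℝ)) (Ici 0) S :=
      fun τ hτ => mk_mem_prod hx hτ
    have hslice : HasDerivWithinAt (fun τ => α x τ) (L (x, t) (0, 1)) (Ici 0) t :=
      hF.comp_hasDerivWithinAt t hcurve hmaps
    have hu : UniqueDiffWithinAt ℝ (Ici (0:ℝ)) t := (uniqueDiffOn_Ici 0) t ht
    have h1 := hslice.derivWithin hu
    have h2 := (hαt x hx t ht).derivWithin hu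
    simp only [tsCl1_eq hx, tsCl2_eq ht]
    rw [← h1, ← h2]

end TSAux

set_option maxHeartbeats 2000000 in
/-- Exponential L² decay of the target system (Proposition 3.1, decay part). -/
theorem target_system_L2_exponential_decay
    (ε₁ ε₂ : ℝ → ℝ) (q : ℝ)
    (hε₁ : ContDiffOn ℝ 1 ε₁ (Icc 0 1)) (hε₂ : ContDiffOn ℝ 1 ε₂ (Icc 0 1))
    (hε₁pos : ∀ x ∈ Icc (0:ℝ) 1, 0 < ε₁ x) (hε₂pos : ∀ x ∈ Icc (0:ℝ) 1, 0 < ε₂ x) :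
    ∀ lam > (0:ℝ), ∃ c > (0:ℝ),
      ∀ (α β αx βx αt βt : ℝ → ℝ → ℝ),
        ContDiffOn ℝ 1 (Function.uncurry α) (Icc 0 1 ×ˢ Ici 0) →
        ContDiffOn ℝ 1 (Function.uncurry β) (Icc 0 1 ×ˢ Ici 0) →
        (∀ x ∈ Icc (0:ℝ) 1, ∀ t ∈ Ici (0:ℝ),
          HasDerivWithinAt (fun s => α s t) (αx x t) (Icc 0 1) x ∧
          HasDerivWithinAt (fun s => β s t) (βx x t) (Icc 0 1) x ∧
          HasDerivWithinAt (fun τ => α x τ) (αt x t) (Ici 0) t ∧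
          HasDerivWithinAt (fun τ => β x τ) (βt x t) (Ici 0) t) →
        -- the target system γ_t = Σ(x) γ_x with Σ = diag(-ε₁, ε₂)
        (∀ x ∈ Icc (0:ℝ) 1, ∀ t ∈ Ici (0:ℝ),
          αt x t = -ε₁ x * αx x t ∧ βt x t = ε₂ x * βx x t) →
        -- boundary conditions
        (∀ t ∈ Ici (0:ℝ), α 0 t = q * β 0 t ∧ β 1 t = 0) →
        ∀ t ∈ Ici (0:ℝ),
          Real.sqrt (∫ ξ in (0:ℝ)..1, ((α ξ t) ^ 2 + (β ξ t) ^ 2)) ≤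
            c * Real.exp (-lam * t) *
              Real.sqrt (∫ ξ in (0:ℝ)..1, ((α ξ 0) ^ 2 + (β ξ 0) ^ 2)) := by
  intro lam hlam
  -- uniform bounds for the speeds
  obtain ⟨m, hm, hmle⟩ : ∃ m > (0:ℝ), ∀ x ∈ Icc (0:ℝ) 1, m ≤ ε₁ x ∧ m ≤ ε₂ x := by
    obtain ⟨x₁, hx₁, h₁⟩ := isCompact_Icc.exists_isMinOn (⟨0, by norm_num⟩ :
      (Icc (0:ℝ) 1).Nonempty) hε₁.continuousOn
    obtain ⟨x₂, hx₂, h₂⟩ := isCompact_Icc.exists_isMinOn (⟨0, by norm_num⟩ :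
      (Icc (0:ℝ) 1).Nonempty) hε₂.continuousOn
    refine ⟨min (ε₁ x₁) (ε₂ x₂), lt_min (hε₁pos _ hx₁) (hε₂pos _ hx₂), fun x hx => ?_⟩
    exact ⟨le_trans (min_le_left _ _) (h₁ hx), le_trans (min_le_right _ _) (h₂ hx)⟩
  obtain ⟨M, hM, hMge⟩ : ∃ M > (0:ℝ), ∀ x ∈ Icc (0:ℝ) 1, ε₁ x ≤ M ∧ ε₂ x ≤ M := by
    obtain ⟨x₁, hx₁, h₁⟩ := isCompact_Icc.exists_isMaxOn (⟨0, by norm_num⟩ :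
      (Icc (0:ℝ) 1).Nonempty) hε₁.continuousOn
    obtain ⟨x₂, hx₂, h₂⟩ := isCompact_Icc.exists_isMaxOn (⟨0, by norm_num⟩ :
      (Icc (0:ℝ) 1).Nonempty) hε₂.continuousOn
    refine ⟨max (ε₁ x₁) (ε₂ x₂), lt_max_iff.2 (Or.inl (hε₁pos _ hx₁)), fun x hx => ?_⟩
    exact ⟨le_trans (h₁ hx) (le_max_left _ _), le_trans (h₂ hx) (le_max_right _ _)⟩
  set A : ℝ := 1 / (1 + q ^ 2) with hA
  have hApos : 0 < A := by positivity
  have hAle : A * q ^ 2 ≤ 1 := by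
    rw [hA]; rw [div_mul_eq_mul_div, div_le_one (by positivity)]; nlinarith [sq_nonneg q]
  have hA1 : A ≤ 1 := by
    rw [hA, div_le_one (by positivity)]; nlinarith [sq_nonneg q]
  set μ : ℝ := 2 * lam / m with hμ
  have hμpos : 0 < μ := by positivity
  have hμm : μ * m = 2 * lam := by rw [hμ, div_mul_cancel₀ _ hm.ne']
  -- the weights
  set w₁ : ℝ → ℝ := fun x => A * Real.exp (-μ * x) / ε₁ x with hw₁
  set w₂ : ℝ → ℝ := fun x => Real.exp (μ * x) / ε₂ x with hw₂
  set cw : ℝ := min (A * Real.exp (-μ) / M) (1 / M) with hcw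
  set Cw : ℝ := max (A / m) (Real.exp μ / m) with hCw
  have hcwpos : 0 < cw := by
    apply lt_min <;> positivity
  have hCwpos : 0 < Cw := lt_max_iff.2 (Or.inl (by positivity))
  have hwlb : ∀ x ∈ Icc (0:ℝ) 1, cw ≤ w₁ x ∧ cw ≤ w₂ x := by
    intro x hx
    have h1 : (0:ℝ) < ε₁ x := hε₁pos x hx
    have h2 : (0:ℝ) < ε₂ x := hε₂pos x hx
    have he1 : Real.exp (-μ) ≤ Real.exp (-μ * x) := by
      apply Real.exp_le_exp.2; nlinarith [hx.1, hx.2]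
    have he2 : (1:ℝ) ≤ Real.exp (μ * x) := by
      rw [← Real.exp_zero]; apply Real.exp_le_exp.2; nlinarith [hx.1]
    constructor
    · refine le_trans (min_le_left _ _) ?_
      rw [hw₁]
      apply div_le_div₀ (by positivity) (by nlinarith) h1 ((hMge x hx).1)
    · refine le_trans (min_le_right _ _) ?_
      rw [hw₂]
      apply div_le_div₀ (by positivity) he2 h2 ((hMge x hx).2)
  have hwub : ∀ x ∈ Icc (0:ℝ) 1, w₁ x ≤ Cw ∧ w₂ x ≤ Cw := by
    intro x hx
    have h1 : (0:ℝ) < ε₁ x := hε₁pos x hx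
    have h2 : (0:ℝ) < ε₂ x := hε₂pos x hx
    have he1 : Real.exp (-μ * x) ≤ 1 := by
      rw [← Real.exp_zero]; apply Real.exp_le_exp.2; nlinarith [hx.1]
    have he2 : Real.exp (μ * x) ≤ Real.exp μ := by
      apply Real.exp_le_exp.2; nlinarith [hx.2]
    constructor
    · refine le_trans ?_ (le_max_left _ _)
      rw [hw₁]
      apply div_le_div₀ hApos.le (by nlinarith) hm ((hmle x hx).1)
    · refine le_trans ?_ (le_max_right _ _)
      rw [hw₂]
      apply div_le_div₀ (Real.exp_pos _).le he2 hm ((hmle x hx).2)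
  refine ⟨Real.sqrt (Cw / cw), Real.sqrt_pos.2 (by positivity), ?_⟩
  intro α β αx βx αt βt hα hβ hD hsys hbc t ht
  -- continuous extensions of the partial derivatives
  obtain ⟨Ax, hAxc, hAxeq⟩ := ts_partial_x hα (fun x hx τ hτ => (hD x hx τ hτ).1)
  obtain ⟨Bx, hBxc, hBxeq⟩ := ts_partial_x hβ (fun x hx τ hτ => (hD x hx τ hτ).2.1)
  obtain ⟨At, hAtc, hAteq⟩ := ts_partial_t hα (fun x hx τ hτ => (hD x hx τ hτ).2.2.1)
  obtain ⟨Bt, hBtc, hBteq⟩ := ts_partial_t hβ (fun x hx τ hτ => (hD x hx τ hτ).2.2.2)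
  -- continuous extensions of the solution
  set ab : ℝ × ℝ → ℝ := fun p => α (tsCl1 p.1) (tsCl2 p.2) with hab
  set bb : ℝ × ℝ → ℝ := fun p => β (tsCl1 p.1) (tsCl2 p.2) with hbb
  have habc : Continuous ab := tsClamp_cont hα.continuousOn
  have hbbc : Continuous bb := tsClamp_cont hβ.continuousOn
  have habeq : ∀ x ∈ Icc (0:ℝ) 1, ∀ τ ∈ Ici (0:ℝ), ab (x, τ) = α x τ := by
    intro x hx τ hτ; simp [hab, tsCl1_eq hx, tsCl2_eq hτ]
  have hbbeq : ∀ x ∈ Icc (0:ℝ) 1, ∀ τ ∈ Ici (0:ℝ), bb (x, τ) = β x τ := by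
    intro x hx τ hτ; simp [hbb, tsCl1_eq hx, tsCl2_eq hτ]
  -- continuous extensions of the weights
  set w1b : ℝ → ℝ := fun x => w₁ (tsCl1 x) with hw1b
  set w2b : ℝ → ℝ := fun x => w₂ (tsCl1 x) with hw2b
  have hw1bc : Continuous w1b := by
    apply tsClamp1_cont
    exact ((continuous_const.mul (Real.continuous_exp.comp
      (continuous_const.mul continuous_id))).continuousOn).div hε₁.continuousOn
      (fun x hx => (hε₁pos x hx).ne')
  have hw2bc : Continuous w2b := by
    apply tsClamp1_cont
    exact ((Real.continuous_exp.comp (continuous_const.mul continuous_id)).continuousOn).div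
      hε₂.continuousOn (fun x hx => (hε₂pos x hx).ne')
  have hw1beq : ∀ x ∈ Icc (0:ℝ) 1, w1b x = w₁ x := by
    intro x hx; simp [hw1b, tsCl1_eq hx]
  have hw2beq : ∀ x ∈ Icc (0:ℝ) 1, w2b x = w₂ x := by
    intro x hx; simp [hw2b, tsCl1_eq hx]
  -- the Lyapunov integrand and its relatives
  set F : ℝ → ℝ → ℝ := fun x τ => w₁ x * α x τ ^ 2 + w₂ x * β x τ ^ 2 with hF'
  set Ft : ℝ → ℝ → ℝ := fun x τ =>
    2 * w₁ x * α x τ * αt x τ + 2 * w₂ x * β x τ * βt x τ with hFt'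
  set H : ℝ → ℝ → ℝ := fun x τ =>
    A * Real.exp (-μ * x) * α x τ ^ 2 + Real.exp (μ * x) * β x τ ^ 2 with hH'
  set G : ℝ → ℝ → ℝ := fun x τ =>
    -(A * Real.exp (-μ * x)) * α x τ ^ 2 + Real.exp (μ * x) * β x τ ^ 2 with hG'
  set Fb : ℝ × ℝ → ℝ := fun p => w1b p.1 * ab p ^ 2 + w2b p.1 * bb p ^ 2 with hFb'
  set Ftb : ℝ × ℝ → ℝ := fun p =>
    2 * w1b p.1 * ab p * At p + 2 * w2b p.1 * bb p * Bt p with hFtb'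
  set Hb : ℝ × ℝ → ℝ := fun p =>
    A * Real.exp (-μ * p.1) * ab p ^ 2 + Real.exp (μ * p.1) * bb p ^ 2 with hHb'
  set Gb : ℝ × ℝ → ℝ := fun p =>
    -(A * Real.exp (-μ * p.1)) * ab p ^ 2 + Real.exp (μ * p.1) * bb p ^ 2 with hGb'
  have hexp1c : Continuous (fun p : ℝ × ℝ => Real.exp (-μ * p.1)) :=
    Real.continuous_exp.comp (continuous_const.mul continuous_fst)
  have hexp2c : Continuous (fun p : ℝ × ℝ => Real.exp (μ * p.1)) :=
    Real.continuous_exp.comp (continuous_const.mul continuous_fst)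
  have hFbc : Continuous Fb :=
    ((hw1bc.comp continuous_fst).mul (habc.pow 2)).add
      ((hw2bc.comp continuous_fst).mul (hbbc.pow 2))
  have hFtbc : Continuous Ftb :=
    (((continuous_const.mul (hw1bc.comp continuous_fst)).mul habc).mul hAtc).add
      (((continuous_const.mul (hw2bc.comp continuous_fst)).mul hbbc).mul hBtc)
  have hHbc : Continuous Hb :=
    ((continuous_const.mul hexp1c).mul (habc.pow 2)).add (hexp2c.mul (hbbc.pow 2))
  have hGbc : Continuous Gb :=
    (((continuous_const.mul hexp1c).neg).mul (habc.pow 2)).add (hexp2c.mul (hbbc.pow 2))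
  have hFbeq : ∀ x ∈ Icc (0:ℝ) 1, ∀ τ ∈ Ici (0:ℝ), Fb (x, τ) = F x τ := by
    intro x hx τ hτ
    simp only [hFb', hF', habeq x hx τ hτ, hbbeq x hx τ hτ, hw1beq x hx, hw2beq x hx]
  have hFtbeq : ∀ x ∈ Icc (0:ℝ) 1, ∀ τ ∈ Ici (0:ℝ), Ftb (x, τ) = Ft x τ := by
    intro x hx τ hτ
    simp only [hFtb', hFt', habeq x hx τ hτ, hbbeq x hx τ hτ, hw1beq x hx, hw2beq x hx,
      hAteq x hx τ hτ, hBteq x hx τ hτ]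
  have hHbeq : ∀ x ∈ Icc (0:ℝ) 1, ∀ τ ∈ Ici (0:ℝ), Hb (x, τ) = H x τ := by
    intro x hx τ hτ
    simp only [hHb', hH', habeq x hx τ hτ, hbbeq x hx τ hτ]
  have hGbeq : ∀ x ∈ Icc (0:ℝ) 1, ∀ τ ∈ Ici (0:ℝ), Gb (x, τ) = G x τ := by
    intro x hx τ hτ
    simp only [hGb', hG', habeq x hx τ hτ, hbbeq x hx τ hτ]
  -- integrability helper
  have hCO : ∀ (a b : ℝ), a ≤ b → ∀ (f g : ℝ → ℝ), Continuous g →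
      (∀ s ∈ Icc a b, f s = g s) → IntervalIntegrable f volume a b := by
    intro a b hab f g hg hfg
    apply ContinuousOn.intervalIntegrable
    rw [uIcc_of_le hab]
    exact hg.continuousOn.congr hfg
  -- energy and dissipation
  set E : ℝ → ℝ := fun τ => ∫ x in (0:ℝ)..1, F x τ with hE'
  set D : ℝ → ℝ := fun τ => G 1 τ - G 0 τ - μ * ∫ x in (0:ℝ)..1, H x τ with hD'
  set Db : ℝ → ℝ := fun τ => Gb (1, τ) - Gb (0, τ) - μ * ∫ x in (0:ℝ)..1, Hb (x, τ) with hDb'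
  have hFint : ∀ τ ∈ Ici (0:ℝ), IntervalIntegrable (fun x => F x τ) volume 0 1 := by
    intro τ hτ
    exact hCO 0 1 zero_le_one _ (fun x => Fb (x, τ))
      (hFbc.comp (continuous_id.prodMk continuous_const))
      (fun x hx => (hFbeq x hx τ hτ).symm)
  have hHint : ∀ τ ∈ Ici (0:ℝ), IntervalIntegrable (fun x => H x τ) volume 0 1 := by
    intro τ hτ
    exact hCO 0 1 zero_le_one _ (fun x => Hb (x, τ))
      (hHbc.comp (continuous_id.prodMk continuous_const))
      (fun x hx => (hHbeq x hx τ hτ).symm)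
  have hFtint : ∀ τ ∈ Ici (0:ℝ), IntervalIntegrable (fun x => Ft x τ) volume 0 1 := by
    intro τ hτ
    exact hCO 0 1 zero_le_one _ (fun x => Ftb (x, τ))
      (hFtbc.comp (continuous_id.prodMk continuous_const))
      (fun x hx => (hFtbeq x hx τ hτ).symm)
  -- Step 1: integrating the time-derivative of the integrand in space
  have hkey1 : ∀ τ ∈ Ici (0:ℝ), (∫ x in (0:ℝ)..1, Ft x τ) = D τ := by
    intro τ hτ
    have hderiv : ∀ x ∈ Ioo (0:ℝ) 1,
        HasDerivWithinAt (fun y => G y τ) (Ft x τ + μ * H x τ) (Ioi x) x := by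
      intro x hx
      have hxI : x ∈ Icc (0:ℝ) 1 := Ioo_subset_Icc_self hx
      have hnb : Icc (0:ℝ) 1 ∈ nhds x := Icc_mem_nhds hx.1 hx.2
      have hax : HasDerivAt (fun s => α s τ) (αx x τ) x := ((hD x hxI τ hτ).1).hasDerivAt hnb
      have hbx : HasDerivAt (fun s => β s τ) (βx x τ) x := ((hD x hxI τ hτ).2.1).hasDerivAt hnb
      have ha2 : HasDerivAt (fun s => (α s τ) ^ 2) (2 * α x τ * αx x τ) x := by
        simpa using hax.fun_pow 2
      have hb2 : HasDerivAt (fun s => (β s τ) ^ 2) (2 * β x τ * βx x τ) x := by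
        simpa using hbx.fun_pow 2
      have he1 : HasDerivAt (fun y : ℝ => Real.exp (-μ * y)) (Real.exp (-μ * x) * (-μ)) x := by
        simpa [Function.comp_def] using (Real.hasDerivAt_exp (-μ * x)).comp x ((hasDerivAt_id x).const_mul (-μ))
      have he2 : HasDerivAt (fun y : ℝ => Real.exp (μ * y)) (Real.exp (μ * x) * μ) x := by
        simpa [Function.comp_def] using (Real.hasDerivAt_exp (μ * x)).comp x ((hasDerivAt_id x).const_mul μ)
      have hu : HasDerivAt (fun y : ℝ => -(A * Real.exp (-μ * y)))
          (-(A * (Real.exp (-μ * x) * (-μ)))) x := (he1.const_mul A).neg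
      have hG1 : HasDerivAt (fun y => G y τ)
          (-(A * (Real.exp (-μ * x) * (-μ))) * α x τ ^ 2 +
            -(A * Real.exp (-μ * x)) * (2 * α x τ * αx x τ) +
            (Real.exp (μ * x) * μ * β x τ ^ 2 +
              Real.exp (μ * x) * (2 * β x τ * βx x τ))) x := by
        simp only [hG']
        exact (hu.mul ha2).add (he2.mul hb2)
      have hval : (-(A * (Real.exp (-μ * x) * (-μ))) * α x τ ^ 2 +
            -(A * Real.exp (-μ * x)) * (2 * α x τ * αx x τ) +
            (Real.exp (μ * x) * μ * β x τ ^ 2 +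
              Real.exp (μ * x) * (2 * β x τ * βx x τ))) = Ft x τ + μ * H x τ := by
        have hs1 := (hsys x hxI τ hτ).1
        have hs2 := (hsys x hxI τ hτ).2
        have hne1 : ε₁ x ≠ 0 := (hε₁pos x hxI).ne'
        have hne2 : ε₂ x ≠ 0 := (hε₂pos x hxI).ne'
        simp only [hFt', hH', hw₁, hw₂, hs1, hs2]
        field_simp
        ring
      rw [hval] at hG1
      exact hG1.hasDerivWithinAt
    have hcont : ContinuousOn (fun y => G y τ) (Icc 0 1) := by
      have : Continuous (fun y => Gb (y, τ)) :=
        hGbc.comp (continuous_id.prodMk continuous_const)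
      exact this.continuousOn.congr (fun x hx => (hGbeq x hx τ hτ).symm)
    have hint : IntervalIntegrable (fun x => Ft x τ + μ * H x τ) volume 0 1 :=
      (hFtint τ hτ).add ((hHint τ hτ).const_mul μ)
    have hFTC := intervalIntegral.integral_eq_sub_of_hasDeriv_right_of_le zero_le_one
      hcont hderiv hint
    have hsplit : (∫ x in (0:ℝ)..1, (Ft x τ + μ * H x τ)) =
        (∫ x in (0:ℝ)..1, Ft x τ) + μ * ∫ x in (0:ℝ)..1, H x τ := by
      rw [intervalIntegral.integral_add (hFtint τ hτ) ((hHint τ hτ).const_mul μ),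
        intervalIntegral.integral_const_mul]
    rw [hsplit] at hFTC
    simp only [hD']
    linarith [hFTC]
  -- Step 2: the dissipation estimate
  have hkey2 : ∀ τ ∈ Ici (0:ℝ), D τ ≤ -(2 * lam) * E τ := by
    intro τ hτ
    have hb1 : β 1 τ = 0 := (hbc τ hτ).2
    have hb0 : α 0 τ = q * β 0 τ := (hbc τ hτ).1
    have hG1 : G 1 τ ≤ 0 := by
      simp only [hG', hb1]
      have h1 : (0:ℝ) < A * Real.exp (-μ * 1) := by positivity
      nlinarith [sq_nonneg (α 1 τ)]
    have hG0 : 0 ≤ G 0 τ := by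
      simp only [hG', hb0]
      have h1 : Real.exp (-μ * 0) = 1 := by norm_num
      have h2 : Real.exp (μ * 0) = 1 := by norm_num
      rw [h1, h2]
      have h3 := sq_nonneg (β 0 τ)
      nlinarith [mul_pow q (β 0 τ) 2]
    have hHF : ∀ x ∈ Icc (0:ℝ) 1, m * F x τ ≤ H x τ := by
      intro x hx
      have h1 : (0:ℝ) < ε₁ x := hε₁pos x hx
      have h2 : (0:ℝ) < ε₂ x := hε₂pos x hx
      have hr1 : (0:ℝ) ≤ A * Real.exp (-μ * x) * α x τ ^ 2 := by positivity
      have hr2 : (0:ℝ) ≤ Real.exp (μ * x) * β x τ ^ 2 := by positivity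
      have hm1 : m / ε₁ x ≤ 1 := (div_le_one h1).2 (hmle x hx).1
      have hm2 : m / ε₂ x ≤ 1 := (div_le_one h2).2 (hmle x hx).2
      have k1 : m * (w₁ x * α x τ ^ 2) ≤ A * Real.exp (-μ * x) * α x τ ^ 2 := by
        have : m * (w₁ x * α x τ ^ 2) =
            (A * Real.exp (-μ * x) * α x τ ^ 2) * (m / ε₁ x) := by
          simp only [hw₁]; ring
        rw [this]
        calc (A * Real.exp (-μ * x) * α x τ ^ 2) * (m / ε₁ x)
            ≤ (A * Real.exp (-μ * x) * α x τ ^ 2) * 1 :=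
              mul_le_mul_of_nonneg_left hm1 hr1
          _ = A * Real.exp (-μ * x) * α x τ ^ 2 := mul_one _
      have k2 : m * (w₂ x * β x τ ^ 2) ≤ Real.exp (μ * x) * β x τ ^ 2 := by
        have : m * (w₂ x * β x τ ^ 2) = (Real.exp (μ * x) * β x τ ^ 2) * (m / ε₂ x) := by
          simp only [hw₂]; ring
        rw [this]
        calc (Real.exp (μ * x) * β x τ ^ 2) * (m / ε₂ x)
            ≤ (Real.exp (μ * x) * β x τ ^ 2) * 1 := mul_le_mul_of_nonneg_left hm2 hr2
          _ = Real.exp (μ * x) * β x τ ^ 2 := mul_one _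
      simp only [hF', hH']
      calc m * (w₁ x * α x τ ^ 2 + w₂ x * β x τ ^ 2)
          = m * (w₁ x * α x τ ^ 2) + m * (w₂ x * β x τ ^ 2) := by ring
        _ ≤ A * Real.exp (-μ * x) * α x τ ^ 2 + Real.exp (μ * x) * β x τ ^ 2 :=
            add_le_add k1 k2
    have hint : m * E τ ≤ ∫ x in (0:ℝ)..1, H x τ := by
      have h := intervalIntegral.integral_mono_on zero_le_one
        ((hFint τ hτ).const_mul m) (hHint τ hτ) hHF
      rw [intervalIntegral.integral_const_mul] at h
      exact h
    have hμint : μ * (m * E τ) ≤ μ * ∫ x in (0:ℝ)..1, H x τ :=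
      mul_le_mul_of_nonneg_left hint hμpos.le
    simp only [hD']
    have h5 : μ * (m * E τ) = 2 * lam * E τ := by rw [← mul_assoc, hμm]
    linarith [hG1, hG0, hμint, h5]
  -- Step 3: the energy identity
  have hkey3 : ∀ τ ∈ Ici (0:ℝ), E τ = E 0 + ∫ s in (0:ℝ)..τ, D s := by
    intro τ hτ
    -- FTC in time, pointwise in space
    have hFTCt : ∀ x ∈ Icc (0:ℝ) 1, (∫ s in (0:ℝ)..τ, Ft x s) = F x τ - F x 0 := by
      intro x hx
      have hcont : ContinuousOn (fun s => F x s) (Icc 0 τ) := by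
        have : Continuous (fun s => Fb (x, s)) :=
          hFbc.comp (continuous_const.prodMk continuous_id)
        exact this.continuousOn.congr (fun s hs => (hFbeq x hx s hs.1).symm)
      have hderiv : ∀ s ∈ Ioo (0:ℝ) τ, HasDerivWithinAt (fun s => F x s) (Ft x s) (Ioi s) s := by
        intro s hs
        have hsI : s ∈ Ici (0:ℝ) := le_of_lt hs.1
        have hsub : Ioi s ⊆ Ici (0:ℝ) := fun y hy => Set.mem_Ici.2 (le_trans (Set.mem_Ici.1 hsI) (le_of_lt hy))
        have hat : HasDerivWithinAt (fun τ' => α x τ') (αt x s) (Ioi s) s :=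
          ((hD x hx s hsI).2.2.1).mono hsub
        have hbt : HasDerivWithinAt (fun τ' => β x τ') (βt x s) (Ioi s) s :=
          ((hD x hx s hsI).2.2.2).mono hsub
        have ha2 : HasDerivWithinAt (fun τ' => (α x τ') ^ 2) (2 * α x s * αt x s) (Ioi s) s := by
          simpa using hat.fun_pow 2
        have hb2 : HasDerivWithinAt (fun τ' => (β x τ') ^ 2) (2 * β x s * βt x s) (Ioi s) s := by
          simpa using hbt.fun_pow 2
        have h := (ha2.const_mul (w₁ x)).add (hb2.const_mul (w₂ x))
        have hval : w₁ x * (2 * α x s * αt x s) + w₂ x * (2 * β x s * βt x s) = Ft x s := by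
          simp only [hFt']; ring
        rw [hval] at h
        exact h
      have hint : IntervalIntegrable (fun s => Ft x s) volume 0 τ :=
        hCO 0 τ hτ _ (fun s => Ftb (x, s))
          (hFtbc.comp (continuous_const.prodMk continuous_id))
          (fun s hs => (hFtbeq x hx s hs.1).symm)
      exact intervalIntegral.integral_eq_sub_of_hasDeriv_right_of_le hτ hcont hderiv hint
    -- Fubini for the clamped integrand
    have hswap : (∫ x in (0:ℝ)..1, ∫ s in (0:ℝ)..τ, Ftb (x, s)) =
        ∫ s in (0:ℝ)..τ, ∫ x in (0:ℝ)..1, Ftb (x, s) := by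
      have hIntProd : Integrable (Function.uncurry (fun x s => Ftb (x, s)))
          ((volume.restrict (Ioc (0:ℝ) 1)).prod (volume.restrict (Ioc (0:ℝ) τ))) := by
        rw [Measure.prod_restrict]
        have h1 : IntegrableOn Ftb (Icc (0:ℝ) 1 ×ˢ Icc (0:ℝ) τ) volume :=
          hFtbc.continuousOn.integrableOn_compact (isCompact_Icc.prod isCompact_Icc)
        have h2 : IntegrableOn Ftb (Ioc (0:ℝ) 1 ×ˢ Ioc (0:ℝ) τ) volume :=
          h1.mono_set (prod_mono Ioc_subset_Icc_self Ioc_subset_Icc_self)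
        rw [Measure.volume_eq_prod] at h2
        exact h2
      have h := MeasureTheory.integral_integral_swap hIntProd
      simp only [intervalIntegral.integral_of_le zero_le_one,
        intervalIntegral.integral_of_le hτ]
      exact h
    -- put things together
    have e1 : E τ - E 0 = ∫ x in (0:ℝ)..1, (F x τ - F x 0) :=
      (intervalIntegral.integral_sub (hFint τ hτ) (hFint 0 Set.self_mem_Ici)).symm
    have e2 : (∫ x in (0:ℝ)..1, (F x τ - F x 0)) =
        ∫ x in (0:ℝ)..1, ∫ s in (0:ℝ)..τ, Ftb (x, s) := by
      apply intervalIntegral.integral_congr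
      intro x hx
      rw [uIcc_of_le zero_le_one] at hx
      show F x τ - F x 0 = ∫ s in (0:ℝ)..τ, Ftb (x, s)
      rw [← hFTCt x hx]
      apply intervalIntegral.integral_congr
      intro s hs
      rw [uIcc_of_le hτ] at hs
      exact (hFtbeq x hx s hs.1).symm
    have e3 : (∫ s in (0:ℝ)..τ, ∫ x in (0:ℝ)..1, Ftb (x, s)) = ∫ s in (0:ℝ)..τ, D s := by
      apply intervalIntegral.integral_congr
      intro s hs
      rw [uIcc_of_le hτ] at hs
      show (∫ x in (0:ℝ)..1, Ftb (x, s)) = D s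
      rw [← hkey1 s hs.1]
      apply intervalIntegral.integral_congr
      intro x hx
      rw [uIcc_of_le zero_le_one] at hx
      exact hFtbeq x hx s hs.1
    have := e1.trans (e2.trans (hswap.trans e3))
    linarith [this]
  -- continuity of the clamped dissipation
  have hDbc : Continuous Db := by
    have h1 : Continuous (fun τ => Gb (1, τ)) :=
      hGbc.comp (continuous_const.prodMk continuous_id)
    have h2 : Continuous (fun τ => Gb (0, τ)) :=
      hGbc.comp (continuous_const.prodMk continuous_id)
    have h3 : Continuous (fun τ => ∫ x in (0:ℝ)..1, Hb (x, τ)) := by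
      have huc : Continuous (Function.uncurry fun (τ x : ℝ) => Hb (x, τ)) := by
        exact hHbc.comp continuous_swap
      exact intervalIntegral.continuous_parametric_intervalIntegral_of_continuous' huc 0 1
    exact (h1.sub h2).sub (continuous_const.mul h3)
  have hDeq : ∀ s ∈ Ici (0:ℝ), D s = Db s := by
    intro s hs
    simp only [hD', hDb']
    rw [hGbeq 1 (by norm_num) s hs, hGbeq 0 (by norm_num) s hs]
    congr 1
    congr 1
    apply intervalIntegral.integral_congr
    intro x hx
    rw [uIcc_of_le zero_le_one] at hx
    exact (hHbeq x hx s hs).symm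
  have hkey3' : ∀ τ ∈ Ici (0:ℝ), E τ = E 0 + ∫ s in (0:ℝ)..τ, Db s := by
    intro τ hτ
    rw [hkey3 τ hτ]
    congr 1
    apply intervalIntegral.integral_congr
    intro s hs
    rw [uIcc_of_le hτ] at hs
    exact hDeq s hs.1
  -- Grönwall via monotonicity of the exponentially weighted energy
  set ψ : ℝ → ℝ := fun τ => Real.exp (2 * lam * τ) * (E 0 + ∫ s in (0:ℝ)..τ, Db s) with hψ'
  have hψd : ∀ τ, HasDerivAt ψ
      (Real.exp (2 * lam * τ) * (2 * lam * (E 0 + ∫ s in (0:ℝ)..τ, Db s) + Db τ)) τ := by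
    intro τ
    have h1 : HasDerivAt (fun τ => ∫ s in (0:ℝ)..τ, Db s) (Db τ) τ :=
      (hDbc.integral_hasStrictDerivAt 0 τ).hasDerivAt
    have h2 : HasDerivAt (fun τ : ℝ => Real.exp (2 * lam * τ))
        (Real.exp (2 * lam * τ) * (2 * lam)) τ := by
      simpa [Function.comp_def] using
        (Real.hasDerivAt_exp (2 * lam * τ)).comp τ ((hasDerivAt_id τ).const_mul (2 * lam))
    have h3 := h2.mul (h1.const_add (E 0))
    have : Real.exp (2 * lam * τ) * (2 * lam) * ((fun τ => E 0 + ∫ s in (0:ℝ)..τ, Db s) τ) +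
        Real.exp (2 * lam * τ) * Db τ =
        Real.exp (2 * lam * τ) * (2 * lam * (E 0 + ∫ s in (0:ℝ)..τ, Db s) + Db τ) := by
      ring
    rw [this] at h3
    exact h3
  have hψanti : AntitoneOn ψ (Ici 0) := by
    apply antitoneOn_of_deriv_nonpos (convex_Ici 0)
    · exact fun τ _ => ((hψd τ).differentiableAt).continuousAt.continuousWithinAt
    · intro τ hτ
      exact ((hψd τ).differentiableAt).differentiableWithinAt
    · intro τ hτ
      rw [interior_Ici] at hτ
      have hτ0 : τ ∈ Ici (0:ℝ) := Set.mem_Ici.2 (le_of_lt (Set.mem_Ioi.1 hτ))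
      rw [(hψd τ).deriv]
      have hEτ : E 0 + ∫ s in (0:ℝ)..τ, Db s = E τ := (hkey3' τ hτ0).symm
      rw [hEτ]
      have h1 := hkey2 τ hτ0
      have h2 : Db τ = D τ := (hDeq τ hτ0).symm
      apply mul_nonpos_of_nonneg_of_nonpos (Real.exp_nonneg _)
      rw [h2]
      linarith [h1]
  have hψt : ψ t ≤ ψ 0 := hψanti Set.self_mem_Ici ht ht
  have hEdecay : E t ≤ Real.exp (-(2 * lam) * t) * E 0 := by
    have h0 : ψ 0 = E 0 := by simp [hψ']
    have h1 : ψ t = Real.exp (2 * lam * t) * E t := by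
      simp only [hψ']
      rw [hkey3' t ht]
    rw [h0, h1] at hψt
    have hexp : (0:ℝ) < Real.exp (2 * lam * t) := Real.exp_pos _
    rw [show -(2 * lam) * t = -(2 * lam * t) by ring, Real.exp_neg, inv_mul_eq_div,
      le_div_iff₀ hexp]
    linarith [hψt]
  -- comparison with the L² norm
  have hN2int : ∀ τ ∈ Ici (0:ℝ),
      IntervalIntegrable (fun x => α x τ ^ 2 + β x τ ^ 2) volume 0 1 := by
    intro τ hτ
    exact hCO 0 1 zero_le_one _ (fun x => ab (x, τ) ^ 2 + bb (x, τ) ^ 2)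
      (((habc.comp (continuous_id.prodMk continuous_const)).pow 2).add
        ((hbbc.comp (continuous_id.prodMk continuous_const)).pow 2))
      (fun x hx => by
        show α x τ ^ 2 + β x τ ^ 2 = ab (x, τ) ^ 2 + bb (x, τ) ^ 2
        rw [habeq x hx τ hτ, hbbeq x hx τ hτ])
  have hlow : cw * (∫ x in (0:ℝ)..1, (α x t ^ 2 + β x t ^ 2)) ≤ E t := by
    have h := intervalIntegral.integral_mono_on zero_le_one
      ((hN2int t ht).const_mul cw) (hFint t ht) (fun x hx => by
        have h1 := (hwlb x hx).1
        have h2 := (hwlb x hx).2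
        have h3 := sq_nonneg (α x t)
        have h4 := sq_nonneg (β x t)
        show cw * (α x t ^ 2 + β x t ^ 2) ≤ F x t
        simp only [hF']
        nlinarith [mul_le_mul_of_nonneg_right h1 h3, mul_le_mul_of_nonneg_right h2 h4])
    rw [intervalIntegral.integral_const_mul] at h
    exact h
  have hup : E 0 ≤ Cw * (∫ x in (0:ℝ)..1, (α x 0 ^ 2 + β x 0 ^ 2)) := by
    have h := intervalIntegral.integral_mono_on zero_le_one
      (hFint 0 Set.self_mem_Ici) ((hN2int 0 Set.self_mem_Ici).const_mul Cw) (fun x hx => by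
        have h1 := (hwub x hx).1
        have h2 := (hwub x hx).2
        have h3 := sq_nonneg (α x 0)
        have h4 := sq_nonneg (β x 0)
        show F x 0 ≤ Cw * (α x 0 ^ 2 + β x 0 ^ 2)
        simp only [hF']
        nlinarith [mul_le_mul_of_nonneg_right h1 h3, mul_le_mul_of_nonneg_right h2 h4])
    rw [intervalIntegral.integral_const_mul] at h
    exact h
  -- final computation
  have hexpnn : (0:ℝ) ≤ Real.exp (-(2 * lam) * t) := Real.exp_nonneg _
  have hfinal : (∫ x in (0:ℝ)..1, (α x t ^ 2 + β x t ^ 2)) ≤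
      Cw / cw * Real.exp (-(2 * lam) * t) * (∫ x in (0:ℝ)..1, (α x 0 ^ 2 + β x 0 ^ 2)) := by
    have h1 : cw * (∫ x in (0:ℝ)..1, (α x t ^ 2 + β x t ^ 2)) ≤
        Real.exp (-(2 * lam) * t) * (Cw * (∫ x in (0:ℝ)..1, (α x 0 ^ 2 + β x 0 ^ 2))) := by
      calc cw * (∫ x in (0:ℝ)..1, (α x t ^ 2 + β x t ^ 2)) ≤ E t := hlow
        _ ≤ Real.exp (-(2 * lam) * t) * E 0 := hEdecay
        _ ≤ Real.exp (-(2 * lam) * t) *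
            (Cw * (∫ x in (0:ℝ)..1, (α x 0 ^ 2 + β x 0 ^ 2))) :=
          mul_le_mul_of_nonneg_left hup hexpnn
    have h2 : (∫ x in (0:ℝ)..1, (α x t ^ 2 + β x t ^ 2)) ≤
        (Real.exp (-(2 * lam) * t) *
          (Cw * (∫ x in (0:ℝ)..1, (α x 0 ^ 2 + β x 0 ^ 2)))) / cw := by
      rw [le_div_iff₀ hcwpos]
      linarith [h1]
    have h3 : (Real.exp (-(2 * lam) * t) *
          (Cw * (∫ x in (0:ℝ)..1, (α x 0 ^ 2 + β x 0 ^ 2)))) / cw =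
        Cw / cw * Real.exp (-(2 * lam) * t) * (∫ x in (0:ℝ)..1, (α x 0 ^ 2 + β x 0 ^ 2)) := by
      ring
    rw [h3] at h2
    exact h2
  have h4 := Real.sqrt_le_sqrt hfinal
  rw [Real.sqrt_mul (by positivity : (0:ℝ) ≤ Cw / cw * Real.exp (-(2 * lam) * t)),
    Real.sqrt_mul (by positivity : (0:ℝ) ≤ Cw / cw)] at h4
  have h5 : Real.exp (-(2 * lam) * t) = (Real.exp (-lam * t)) ^ 2 := by
    rw [sq, ← Real.exp_add]
    congr 1
    ring
  rw [h5, Real.sqrt_sq (Real.exp_nonneg _)] at h4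
  exact h4
end

section
/- Finite-time extinction of the target system (Proposition 3.1, finite-time part): Every classical C¹ solution γ of the target system satisfies γ(x,t) = 0 for all x ∈ [0,1] and all t ≥ t_F, where t_F = ∫₀¹ (1/ε₁(ξ) + 1/ε₂(ξ)) dξ. -/
open MeasureTheory Set

/-- Constancy along characteristics: if `u_t = c u_x` on `[0,1] × [0,∞)` and `τ' = -1/c`,
then `x ↦ u x (τ x)` is constant on `[a,b]`. -/
lemma char_const
    (c : ℝ → ℝ) (u ux ut : ℝ → ℝ → ℝ) (τ : ℝ → ℝ)
    (hu : ContDiffOn ℝ 1 (Function.uncurry u) (Icc 0 1 ×ˢ Ici 0))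
    (hux : ∀ x ∈ Icc (0:ℝ) 1, ∀ t ∈ Ici (0:ℝ),
      HasDerivWithinAt (fun s => u s t) (ux x t) (Icc 0 1) x)
    (hut : ∀ x ∈ Icc (0:ℝ) 1, ∀ t ∈ Ici (0:ℝ),
      HasDerivWithinAt (fun s => u x s) (ut x t) (Ici 0) t)
    (hpde : ∀ x ∈ Icc (0:ℝ) 1, ∀ t ∈ Ici (0:ℝ), ut x t = c x * ux x t)
    (hc : ∀ x ∈ Icc (0:ℝ) 1, c x ≠ 0)
    (hτ : ∀ x ∈ Icc (0:ℝ) 1, HasDerivAt τ (-(c x)⁻¹) x)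
    (a b : ℝ) (ha : a ∈ Icc (0:ℝ) 1) (hb : b ∈ Icc (0:ℝ) 1) (hab : a ≤ b)
    (hτpos : ∀ x ∈ Icc a b, 0 ≤ τ x) :
    u b (τ b) = u a (τ a) := by
  have hsub : Icc a b ⊆ Icc (0:ℝ) 1 := Icc_subset_Icc ha.1 hb.2
  have key : ∀ x ∈ Icc a b, HasDerivWithinAt (fun y => u y (τ y)) 0 (Icc a b) x := by
    intro x hx
    have hx01 : x ∈ Icc (0:ℝ) 1 := hsub hx
    have hτx : τ x ∈ Ici (0:ℝ) := hτpos x hx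
    have hmemS : (x, τ x) ∈ (Icc 0 1 ×ˢ Ici 0 : Set (ℝ × ℝ)) := mk_mem_prod hx01 hτx
    have hd : DifferentiableWithinAt ℝ (Function.uncurry u) (Icc 0 1 ×ˢ Ici 0) (x, τ x) :=
      (hu.differentiableOn one_ne_zero) _ hmemS
    set L := fderivWithin ℝ (Function.uncurry u) (Icc 0 1 ×ˢ Ici 0) (x, τ x) with hLdef
    have hLd : HasFDerivWithinAt (Function.uncurry u) L (Icc 0 1 ×ˢ Ici 0) (x, τ x) :=
      hd.hasFDerivWithinAt
    -- identify the x-partial derivative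
    have hι1 : HasDerivWithinAt (fun s : ℝ => (s, τ x)) ((1:ℝ), (0:ℝ)) (Icc 0 1) x :=
      HasDerivWithinAt.prodMk (hasDerivWithinAt_id x _) (hasDerivWithinAt_const x _ (τ x))
    have hm1 : MapsTo (fun s : ℝ => (s, τ x)) (Icc 0 1) (Icc 0 1 ×ˢ Ici 0) :=
      fun s hs => mk_mem_prod hs hτx
    have hc1 : HasDerivWithinAt (fun s => u s (τ x)) (L (1, 0)) (Icc 0 1) x :=
      by have := hLd.comp_hasDerivWithinAt x hι1 hm1; exact this
    have hux' := hux x hx01 (τ x) hτx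
    have e1 : ux x (τ x) = L (1, 0) := by
      rw [← hux'.derivWithin (uniqueDiffOn_Icc one_pos x hx01),
        ← hc1.derivWithin (uniqueDiffOn_Icc one_pos x hx01)]
    -- identify the t-partial derivative
    have hι2 : HasDerivWithinAt (fun s : ℝ => (x, s)) ((0:ℝ), (1:ℝ)) (Ici 0) (τ x) :=
      HasDerivWithinAt.prodMk (hasDerivWithinAt_const _ _ x) (hasDerivWithinAt_id _ _)
    have hm2 : MapsTo (fun s : ℝ => (x, s)) (Ici 0) (Icc 0 1 ×ˢ Ici 0) :=
      fun s hs => mk_mem_prod hx01 hs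
    have hc2 : HasDerivWithinAt (fun s => u x s) (L (0, 1)) (Ici 0) (τ x) :=
      hLd.comp_hasDerivWithinAt _ hι2 hm2
    have hut' := hut x hx01 (τ x) hτx
    have e2 : ut x (τ x) = L (0, 1) := by
      rw [← hut'.derivWithin (uniqueDiffOn_Ici 0 _ hτx),
        ← hc2.derivWithin (uniqueDiffOn_Ici 0 _ hτx)]
    -- chain rule along the characteristic
    have hφ : HasDerivWithinAt (fun y : ℝ => (y, τ y)) ((1:ℝ), -(c x)⁻¹) (Icc a b) x :=
      HasDerivWithinAt.prodMk (hasDerivWithinAt_id x _) ((hτ x hx01).hasDerivWithinAt)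
    have hmφ : MapsTo (fun y : ℝ => (y, τ y)) (Icc a b) (Icc 0 1 ×ˢ Ici 0) :=
      fun y hy => mk_mem_prod (hsub hy) (hτpos y hy)
    have hF : HasDerivWithinAt (fun y => u y (τ y)) (L (1, -(c x)⁻¹)) (Icc a b) x :=
      by have := hLd.comp_hasDerivWithinAt x hφ hmφ; exact this
    have hval : L (1, -(c x)⁻¹) = 0 := by
      have hsplit : ((1:ℝ), -(c x)⁻¹) = ((1:ℝ), (0:ℝ)) + (-(c x)⁻¹) • ((0:ℝ), (1:ℝ)) := by
        simp [Prod.ext_iff]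
      rw [hsplit, map_add, L.map_smul, ← e1, ← e2, hpde x hx01 (τ x) hτx, smul_eq_mul]
      have hcx := hc x hx01
      field_simp
      ring
    rwa [hval] at hF
  have hcont : ContinuousOn (fun y => u y (τ y)) (Icc a b) :=
    fun x hx => ((key x hx).differentiableWithinAt).continuousWithinAt
  have hderiv0 : ∀ x ∈ Ico a b, HasDerivWithinAt (fun y => u y (τ y)) 0 (Ici x) x := by
    intro x hx
    refine (key x ⟨hx.1, hx.2.le⟩).mono_of_mem_nhdsWithin ?_
    have h1 : Iic b ∈ nhds x := Iic_mem_nhds hx.2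
    have h2 := Filter.inter_mem (mem_nhdsWithin_of_mem_nhds h1)
      (self_mem_nhdsWithin : Ici x ∈ nhdsWithin x (Ici x))
    exact Filter.mem_of_superset h2 (fun y hy => ⟨le_trans hx.1 hy.2, hy.1⟩)
  exact constant_of_has_deriv_right_zero hcont hderiv0 b (right_mem_Icc.2 hab)

/-- Finite-time extinction of the target system (Proposition 3.1, finite-time part). -/
theorem target_system_finite_time_extinction
    (ε₁ ε₂ : ℝ → ℝ) (q : ℝ)
    (hε₁ : ContDiffOn ℝ 1 ε₁ (Icc 0 1)) (hε₂ : ContDiffOn ℝ 1 ε₂ (Icc 0 1))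
    (hε₁pos : ∀ x ∈ Icc (0:ℝ) 1, 0 < ε₁ x) (hε₂pos : ∀ x ∈ Icc (0:ℝ) 1, 0 < ε₂ x)
    (α β αx βx αt βt : ℝ → ℝ → ℝ)
    (hα : ContDiffOn ℝ 1 (Function.uncurry α) (Icc 0 1 ×ˢ Ici 0))
    (hβ : ContDiffOn ℝ 1 (Function.uncurry β) (Icc 0 1 ×ˢ Ici 0))
    (hderiv : ∀ x ∈ Icc (0:ℝ) 1, ∀ t ∈ Ici (0:ℝ),
      HasDerivWithinAt (fun s => α s t) (αx x t) (Icc 0 1) x ∧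
      HasDerivWithinAt (fun s => β s t) (βx x t) (Icc 0 1) x ∧
      HasDerivWithinAt (fun τ => α x τ) (αt x t) (Ici 0) t ∧
      HasDerivWithinAt (fun τ => β x τ) (βt x t) (Ici 0) t)
    -- the target system γ_t = Σ(x) γ_x with Σ = diag(-ε₁, ε₂)
    (hpde : ∀ x ∈ Icc (0:ℝ) 1, ∀ t ∈ Ici (0:ℝ),
      αt x t = -ε₁ x * αx x t ∧ βt x t = ε₂ x * βx x t)
    -- boundary conditions
    (hbc : ∀ t ∈ Ici (0:ℝ), α 0 t = q * β 0 t ∧ β 1 t = 0) :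
    ∀ x ∈ Icc (0:ℝ) 1, ∀ t : ℝ,
      (∫ ξ in (0:ℝ)..1, (1 / ε₁ ξ + 1 / ε₂ ξ)) ≤ t →
      α x t = 0 ∧ β x t = 0 := by
  -- clamped coefficients, continuous on all of ℝ
  set p : ℝ → ℝ := fun y => (projIcc (0:ℝ) 1 zero_le_one y : ℝ) with hpdef
  have hpcont : Continuous p := continuous_subtype_val.comp continuous_projIcc
  have hpmem : ∀ y, p y ∈ Icc (0:ℝ) 1 := fun y => (projIcc (0:ℝ) 1 zero_le_one y).2
  have hpeq : ∀ y ∈ Icc (0:ℝ) 1, p y = y := by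
    intro y hy
    simp only [hpdef]
    rw [projIcc_of_mem _ hy]
  set c₁ : ℝ → ℝ := fun y => -ε₁ (p y) with hc₁def
  set c₂ : ℝ → ℝ := fun y => ε₂ (p y) with hc₂def
  have hc₁cont : Continuous c₁ :=
    ((hε₁.continuousOn.comp_continuous hpcont hpmem)).neg
  have hc₂cont : Continuous c₂ :=
    hε₂.continuousOn.comp_continuous hpcont hpmem
  have hc₁neg : ∀ y, c₁ y < 0 := fun y => neg_neg_iff_pos.2 (hε₁pos _ (hpmem y))
  have hc₂pos : ∀ y, 0 < c₂ y := fun y => hε₂pos _ (hpmem y)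
  set g₁ : ℝ → ℝ := fun y => (ε₁ (p y))⁻¹ with hg₁def
  set g₂ : ℝ → ℝ := fun y => (c₂ y)⁻¹ with hg₂def
  have hg₁cont : Continuous g₁ :=
    Continuous.inv₀ (hε₁.continuousOn.comp_continuous hpcont hpmem)
      (fun y => (hε₁pos _ (hpmem y)).ne')
  have hg₂cont : Continuous g₂ :=
    Continuous.inv₀ hc₂cont (fun y => (hc₂pos y).ne')
  have hg₁nonneg : ∀ y, 0 ≤ g₁ y := fun y => (inv_nonneg).2 (hε₁pos _ (hpmem y)).le
  have hg₂nonneg : ∀ y, 0 ≤ g₂ y := fun y => (inv_nonneg).2 (hc₂pos y).le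
  set T₁ : ℝ := ∫ s in (0:ℝ)..1, g₁ s with hT₁def
  set T₂ : ℝ := ∫ s in (0:ℝ)..1, g₂ s with hT₂def
  have hT₁nonneg : 0 ≤ T₁ :=
    intervalIntegral.integral_nonneg zero_le_one (fun s _ => hg₁nonneg s)
  have hT₂nonneg : 0 ≤ T₂ :=
    intervalIntegral.integral_nonneg zero_le_one (fun s _ => hg₂nonneg s)
  -- the extinction time equals T₁ + T₂
  have hTsum : (∫ ξ in (0:ℝ)..1, (1 / ε₁ ξ + 1 / ε₂ ξ)) = T₁ + T₂ := by
    rw [hT₁def, hT₂def,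
      ← intervalIntegral.integral_add (hg₁cont.intervalIntegrable _ _)
        (hg₂cont.intervalIntegrable _ _)]
    apply intervalIntegral.integral_congr
    intro ξ hξ
    rw [uIcc_of_le zero_le_one] at hξ
    simp [hg₁def, hg₂def, hc₂def, hpeq ξ hξ, one_div]
  -- extinction of β after time T₂
  have hβzero : ∀ x ∈ Icc (0:ℝ) 1, ∀ t : ℝ, T₂ ≤ t → β x t = 0 := by
    intro x hx t ht
    set τ : ℝ → ℝ := fun y => t - ∫ s in x..y, g₂ s with hτdef
    have hτd : ∀ y ∈ Icc (0:ℝ) 1, HasDerivAt τ (-(c₂ y)⁻¹) y := by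
      intro y _
      have hI : HasDerivAt (fun z => ∫ s in x..z, g₂ s) (g₂ y) y :=
        intervalIntegral.integral_hasDerivAt_right (hg₂cont.intervalIntegrable _ _)
          hg₂cont.stronglyMeasurable.stronglyMeasurableAtFilter hg₂cont.continuousAt
      exact hI.const_sub t
    have hτpos : ∀ y ∈ Icc x 1, 0 ≤ τ y := by
      intro y hy
      have hle : (∫ s in x..y, g₂ s) ≤ T₂ := by
        rw [hT₂def]
        exact intervalIntegral.integral_mono_interval hx.1 hy.1 hy.2
          (ae_of_all _ fun s => hg₂nonneg s) (hg₂cont.intervalIntegrable _ _)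
      simp only [hτdef]; linarith
    have hkey := char_const c₂ β βx βt τ hβ
      (fun x' hx' t' ht' => (hderiv x' hx' t' ht').2.1)
      (fun x' hx' t' ht' => (hderiv x' hx' t' ht').2.2.2)
      (fun x' hx' t' ht' => by
        rw [(hpde x' hx' t' ht').2, hc₂def]; simp [hpeq x' hx'])
      (fun x' _ => (hc₂pos x').ne') hτd x 1 hx (right_mem_Icc.2 zero_le_one) hx.2 hτpos
    have hτ1 : (0:ℝ) ≤ τ 1 := hτpos 1 (right_mem_Icc.2 hx.2)
    have hbc1 : β 1 (τ 1) = 0 := (hbc (τ 1) hτ1).2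
    have hτx : τ x = t := by simp [hτdef]
    rw [hτx, hbc1] at hkey
    exact hkey.symm
  -- extinction of α after time T₁ + T₂
  have hαzero : ∀ x ∈ Icc (0:ℝ) 1, ∀ t : ℝ, T₁ + T₂ ≤ t → α x t = 0 := by
    intro x hx t ht
    set τ : ℝ → ℝ := fun y => t + ∫ s in x..y, g₁ s with hτdef
    have hτd : ∀ y ∈ Icc (0:ℝ) 1, HasDerivAt τ (-(c₁ y)⁻¹) y := by
      intro y _
      have hI : HasDerivAt (fun z => ∫ s in x..z, g₁ s) (g₁ y) y :=
        intervalIntegral.integral_hasDerivAt_right (hg₁cont.intervalIntegrable _ _)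
          hg₁cont.stronglyMeasurable.stronglyMeasurableAtFilter hg₁cont.continuousAt
      have heq : -(c₁ y)⁻¹ = g₁ y := by
        simp [hc₁def, hg₁def, inv_neg]
      rw [heq]
      exact hI.const_add t
    have hτlB : ∀ y ∈ Icc (0:ℝ) x, T₂ ≤ τ y := by
      intro y hy
      have hle : (∫ s in y..x, g₁ s) ≤ T₁ := by
        rw [hT₁def]
        exact intervalIntegral.integral_mono_interval hy.1 hy.2 hx.2
          (ae_of_all _ fun s => hg₁nonneg s) (hg₁cont.intervalIntegrable _ _)
      have hsymm : (∫ s in x..y, g₁ s) = -∫ s in y..x, g₁ s :=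
        intervalIntegral.integral_symm y x
      simp only [hτdef, hsymm]; linarith
    have hτpos : ∀ y ∈ Icc (0:ℝ) x, 0 ≤ τ y := fun y hy => le_trans hT₂nonneg (hτlB y hy)
    have hkey := char_const c₁ α αx αt τ hα
      (fun x' hx' t' ht' => (hderiv x' hx' t' ht').1)
      (fun x' hx' t' ht' => (hderiv x' hx' t' ht').2.2.1)
      (fun x' hx' t' ht' => by
        rw [(hpde x' hx' t' ht').1, hc₁def]; simp [hpeq x' hx'])
      (fun x' _ => (hc₁neg x').ne) hτd 0 x (left_mem_Icc.2 zero_le_one) hx hx.1 hτpos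
    have hτ0mem : (0:ℝ) ≤ τ 0 := hτpos 0 (left_mem_Icc.2 hx.1)
    have hβ0 : β 0 (τ 0) = 0 :=
      hβzero 0 (left_mem_Icc.2 zero_le_one) (τ 0) (hτlB 0 (left_mem_Icc.2 hx.1))
    have hα0 : α 0 (τ 0) = 0 := by
      rw [(hbc (τ 0) hτ0mem).1, hβ0, mul_zero]
    have hτx : τ x = t := by simp [hτdef]
    rw [hτx, hα0] at hkey
    exact hkey
  intro x hx t ht
  rw [hTsum] at ht
  refine ⟨hαzero x hx t ht, hβzero x hx t ?_⟩
  linarith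
end

section
/- Stability of the modified (cascade) target system used when q = 0 (Section 3.5): Let g : [0,1] → ℝ be continuous and q ∈ ℝ. Every classical C¹ solution (α, β) : [0,1]×[0,∞) → ℝ² of the cascade system α_t(x,t) = −ε₁(x) α_x(x,t) + g(x) β(0,t), β_t(x,t) = ε₂(x) β_x(x,t), with boundary conditions α(0,t) = q β(0,t) and β(1,t) = 0, satisfies: for every λ > 0 there exists c > 0 (depending only on ε₁, ε₂, g, q, λ) with ‖(α,β)(·,t)‖_{L²} ≤ c e^{−λ t} ‖(α,β)(·,0)‖_{L²} for all t ≥ 0; moreover α(x,t) = β(x,t) = 0 for all x ∈ [0,1] and t ≥ t_F := ∫₀¹ (1/ε₁(ξ) + 1/ε₂(ξ)) dξ. -/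
set_option maxHeartbeats 1000000

open MeasureTheory Set Function

namespace CascadeAux

/-- The space-time domain. -/
def S : Set (ℝ × ℝ) := Icc 0 1 ×ˢ Ici 0

lemma uniqueDiffOn_S : UniqueDiffOn ℝ S :=
  (uniqueDiffOn_Icc one_pos).prod (uniqueDiffOn_Ici 0)

/-- Partial derivatives of a `C¹` function on `S` agree with the full derivative,
the partials are continuous on `S` (as functions of the pair), and a chain rule holds. -/
theorem partials (f fx ft : ℝ → ℝ → ℝ)
    (hf : ContDiffOn ℝ 1 (uncurry f) S)
    (hdx : ∀ x ∈ Icc (0:ℝ) 1, ∀ t ∈ Ici (0:ℝ),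
      HasDerivWithinAt (fun s => f s t) (fx x t) (Icc 0 1) x)
    (hdt : ∀ x ∈ Icc (0:ℝ) 1, ∀ t ∈ Ici (0:ℝ),
      HasDerivWithinAt (fun τ => f x τ) (ft x t) (Ici 0) t) :
    ContinuousOn (fun p : ℝ × ℝ => fx p.1 p.2) S ∧
    ContinuousOn (fun p : ℝ × ℝ => ft p.1 p.2) S ∧
    ∀ (u : Set ℝ) (γ₁ γ₂ : ℝ → ℝ) (v₁ v₂ s : ℝ), s ∈ u →
      MapsTo (fun r => (γ₁ r, γ₂ r)) u S →
      HasDerivWithinAt γ₁ v₁ u s → HasDerivWithinAt γ₂ v₂ u s →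
      HasDerivWithinAt (fun r => f (γ₁ r) (γ₂ r))
        (fx (γ₁ s) (γ₂ s) * v₁ + ft (γ₁ s) (γ₂ s) * v₂) u s := by
  set D : ℝ × ℝ → (ℝ × ℝ) →L[ℝ] ℝ := fderivWithin ℝ (uncurry f) S with hD
  have hdiff : DifferentiableOn ℝ (uncurry f) S := hf.differentiableOn one_ne_zero
  have hDer : ∀ p ∈ S, HasFDerivWithinAt (uncurry f) (D p) S p := fun p hp =>
    (hdiff p hp).hasFDerivWithinAt
  have hDcont : ContinuousOn D S := hf.continuousOn_fderivWithin uniqueDiffOn_S le_rfl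
  -- identification of partials
  have key : ∀ p ∈ S, D p (1, 0) = fx p.1 p.2 ∧ D p (0, 1) = ft p.1 p.2 := by
    rintro ⟨x, t⟩ ⟨hx, ht⟩
    constructor
    · have hc : HasDerivWithinAt (fun s : ℝ => (s, t)) ((1 : ℝ), (0 : ℝ)) (Icc 0 1) x :=
        ((hasDerivAt_id x).prodMk (hasDerivAt_const x t)).hasDerivWithinAt
      have hmaps : MapsTo (fun s : ℝ => (s, t)) (Icc 0 1) S := fun s hs => ⟨hs, ht⟩
      have h1 : HasDerivWithinAt (fun s => f s t) (D (x, t) (1, 0)) (Icc 0 1) x := by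
        have := (hDer (x, t) ⟨hx, ht⟩).comp_hasDerivWithinAt x hc hmaps
        exact this
      have hu : UniqueDiffWithinAt ℝ (Icc (0:ℝ) 1) x := uniqueDiffOn_Icc one_pos x hx
      rw [← h1.derivWithin hu, ← (hdx x hx t ht).derivWithin hu]
    · have hc : HasDerivWithinAt (fun τ : ℝ => (x, τ)) ((0 : ℝ), (1 : ℝ)) (Ici 0) t :=
        ((hasDerivAt_const t x).prodMk (hasDerivAt_id t)).hasDerivWithinAt
      have hmaps : MapsTo (fun τ : ℝ => (x, τ)) (Ici 0) S := fun τ hτ => ⟨hx, hτ⟩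
      have h1 : HasDerivWithinAt (fun τ => f x τ) (D (x, t) (0, 1)) (Ici 0) t := by
        have := (hDer (x, t) ⟨hx, ht⟩).comp_hasDerivWithinAt t hc hmaps
        exact this
      have hu : UniqueDiffWithinAt ℝ (Ici (0:ℝ)) t := uniqueDiffOn_Ici 0 t ht
      rw [← h1.derivWithin hu, ← (hdt x hx t ht).derivWithin hu]
  refine ⟨?_, ?_, ?_⟩
  · have : ContinuousOn (fun p : ℝ × ℝ => D p (1, 0)) S :=
      hDcont.clm_apply continuousOn_const
    exact this.congr fun p hp => ((key p hp).1).symm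
  · have : ContinuousOn (fun p : ℝ × ℝ => D p (0, 1)) S :=
      hDcont.clm_apply continuousOn_const
    exact this.congr fun p hp => ((key p hp).2).symm
  · intro u γ₁ γ₂ v₁ v₂ s hs hmaps h1 h2
    have hp : (γ₁ s, γ₂ s) ∈ S := hmaps hs
    have hγ : HasDerivWithinAt (fun r => (γ₁ r, γ₂ r)) ((v₁, v₂) : ℝ × ℝ) u s := h1.prodMk h2
    have hcomp := (hDer _ hp).comp_hasDerivWithinAt s hγ hmaps
    have hval : D (γ₁ s, γ₂ s) (v₁, v₂)
        = fx (γ₁ s) (γ₂ s) * v₁ + ft (γ₁ s) (γ₂ s) * v₂ := by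
      have hvv : ((v₁, v₂) : ℝ × ℝ) = v₁ • ((1:ℝ), (0:ℝ)) + v₂ • ((0:ℝ), (1:ℝ)) := by
        simp [Prod.ext_iff]
      rw [hvv, map_add, ContinuousLinearMap.map_smul, ContinuousLinearMap.map_smul, (key _ hp).1, (key _ hp).2]
      simp [smul_eq_mul]; ring
    rw [hval] at hcomp
    exact hcomp

end CascadeAux

namespace CascadeAux2
open CascadeAux

noncomputable def proj (x : ℝ) : ℝ := max 0 (min 1 x)

lemma proj_mem (x : ℝ) : proj x ∈ Icc (0:ℝ) 1 :=
  ⟨le_max_left _ _, max_le (by norm_num) (min_le_left _ _)⟩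

lemma proj_eq {x : ℝ} (hx : x ∈ Icc (0:ℝ) 1) : proj x = x := by
  have := hx.1; have := hx.2
  unfold proj; rw [min_eq_right hx.2, max_eq_right hx.1]

lemma continuous_proj : Continuous proj :=
  continuous_const.max (continuous_const.min continuous_id)

lemma coeff_cont {ε : ℝ → ℝ} (hc : ContinuousOn ε (Icc 0 1))
    (hpos : ∀ x ∈ Icc (0:ℝ) 1, 0 < ε x) : Continuous (fun x => (ε (proj x))⁻¹) := by
  have h1 : Continuous (fun x => ε (proj x)) :=
    hc.comp_continuous continuous_proj proj_mem
  exact h1.inv₀ fun x => ne_of_gt (hpos _ (proj_mem x))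

lemma coeff_pos {ε : ℝ → ℝ} (hpos : ∀ x ∈ Icc (0:ℝ) 1, 0 < ε x) :
    ∀ x, 0 < (ε (proj x))⁻¹ := fun x => inv_pos.2 (hpos _ (proj_mem x))

end CascadeAux2

namespace CascadeAux2
open CascadeAux intervalIntegral

lemma intInt_hasDerivAt {f : ℝ → ℝ} (hf : Continuous f) (a y : ℝ) :
    HasDerivAt (fun u => ∫ ξ in a..u, f ξ) (f y) y :=
  integral_hasDerivAt_right (hf.intervalIntegrable _ _)
    (hf.stronglyMeasurableAtFilter _ _) hf.continuousAt

lemma intInt_mono {f : ℝ → ℝ} (hf : Continuous f) (hpos : ∀ x, 0 ≤ f x) {a b c : ℝ}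
    (hab : a ≤ b) : (∫ ξ in c..a, f ξ) ≤ ∫ ξ in c..b, f ξ := by
  have h1 : (∫ ξ in c..a, f ξ) + ∫ ξ in a..b, f ξ = ∫ ξ in c..b, f ξ :=
    integral_add_adjacent_intervals (hf.intervalIntegrable _ _) (hf.intervalIntegrable _ _)
  have h2 : 0 ≤ ∫ ξ in a..b, f ξ :=
    integral_nonneg hab fun x _ => hpos x
  linarith

end CascadeAux2

namespace CascadeAux2
open CascadeAux Function intervalIntegral

theorem extinction (ε₁ ε₂ : ℝ → ℝ) (g : ℝ → ℝ) (q : ℝ)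
    (hε₁c : ContinuousOn ε₁ (Icc 0 1)) (hε₂c : ContinuousOn ε₂ (Icc 0 1))
    (hε₁pos : ∀ x ∈ Icc (0:ℝ) 1, 0 < ε₁ x) (hε₂pos : ∀ x ∈ Icc (0:ℝ) 1, 0 < ε₂ x)
    (α β αx βx αt βt : ℝ → ℝ → ℝ)
    (hα : ContDiffOn ℝ 1 (Function.uncurry α) (Icc 0 1 ×ˢ Ici 0))
    (hβ : ContDiffOn ℝ 1 (Function.uncurry β) (Icc 0 1 ×ˢ Ici 0))
    (hder : ∀ x ∈ Icc (0:ℝ) 1, ∀ t ∈ Ici (0:ℝ),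
      HasDerivWithinAt (fun s => α s t) (αx x t) (Icc 0 1) x ∧
      HasDerivWithinAt (fun s => β s t) (βx x t) (Icc 0 1) x ∧
      HasDerivWithinAt (fun τ => α x τ) (αt x t) (Ici 0) t ∧
      HasDerivWithinAt (fun τ => β x τ) (βt x t) (Ici 0) t)
    (hpde : ∀ x ∈ Icc (0:ℝ) 1, ∀ t ∈ Ici (0:ℝ),
      αt x t = -ε₁ x * αx x t + g x * β 0 t ∧ βt x t = ε₂ x * βx x t)
    (hbc : ∀ t ∈ Ici (0:ℝ), α 0 t = q * β 0 t ∧ β 1 t = 0) :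
    ∀ x ∈ Icc (0:ℝ) 1, ∀ t : ℝ,
      (∫ ξ in (0:ℝ)..1, (1 / ε₁ ξ + 1 / ε₂ ξ)) ≤ t →
      α x t = 0 ∧ β x t = 0 := by
  -- extended reciprocal coefficients
  set f₁ : ℝ → ℝ := fun y => (ε₁ (proj y))⁻¹ with hf₁
  set f₂ : ℝ → ℝ := fun y => (ε₂ (proj y))⁻¹ with hf₂
  have hf₁c : Continuous f₁ := coeff_cont hε₁c hε₁pos
  have hf₂c : Continuous f₂ := coeff_cont hε₂c hε₂pos
  have hf₁pos : ∀ x, 0 ≤ f₁ x := fun x => (coeff_pos hε₁pos x).le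
  have hf₂pos : ∀ x, 0 ≤ f₂ x := fun x => (coeff_pos hε₂pos x).le
  set Φ₁ : ℝ → ℝ := fun y => ∫ ξ in (0:ℝ)..y, f₁ ξ with hΦ₁
  set Φ₂ : ℝ → ℝ := fun y => ∫ ξ in y..1, f₂ ξ with hΦ₂
  have hΦ₁d : ∀ y, HasDerivAt Φ₁ (f₁ y) y := fun y => intInt_hasDerivAt hf₁c 0 y
  have hΦ₂d : ∀ y, HasDerivAt Φ₂ (-f₂ y) y := by
    intro y
    have h1 : HasDerivAt (fun u => -∫ ξ in (1:ℝ)..u, f₂ ξ) (-f₂ y) y :=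
      (intInt_hasDerivAt hf₂c 1 y).neg
    exact h1.congr_of_eventuallyEq (Filter.Eventually.of_forall fun u =>
      integral_symm 1 u)
  have hΦ₁cont : Continuous Φ₁ := by
    have : Differentiable ℝ Φ₁ := fun y => (hΦ₁d y).differentiableAt
    exact this.continuous
  have hΦ₂cont : Continuous Φ₂ := by
    have : Differentiable ℝ Φ₂ := fun y => (hΦ₂d y).differentiableAt
    exact this.continuous
  have hΦ₂1 : Φ₂ 1 = 0 := integral_same
  have hΦ₁0 : Φ₁ 0 = 0 := integral_same
  have hΦ₁mono : ∀ {a b : ℝ}, a ≤ b → Φ₁ a ≤ Φ₁ b := fun h => intInt_mono hf₁c hf₁pos h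
  have hΦ₂anti : ∀ {a b : ℝ}, a ≤ b → Φ₂ b ≤ Φ₂ a := by
    intro a b h
    have h1 : (∫ ξ in a..b, f₂ ξ) + ∫ ξ in b..1, f₂ ξ = ∫ ξ in a..1, f₂ ξ :=
      integral_add_adjacent_intervals (hf₂c.intervalIntegrable _ _) (hf₂c.intervalIntegrable _ _)
    have h2 : 0 ≤ ∫ ξ in a..b, f₂ ξ := integral_nonneg h fun x _ => hf₂pos x
    simp only [hΦ₂]; linarith
  have hΦ₁nonneg : ∀ {y : ℝ}, 0 ≤ y → 0 ≤ Φ₁ y := fun h => hΦ₁0 ▸ hΦ₁mono h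
  have hΦ₂nonneg : ∀ {y : ℝ}, y ≤ 1 → 0 ≤ Φ₂ y := fun h => hΦ₂1 ▸ hΦ₂anti h
  -- partial derivative packages
  obtain ⟨-, -, chainα⟩ := partials α αx αt hα
    (fun x hx t ht => (hder x hx t ht).1) (fun x hx t ht => (hder x hx t ht).2.2.1)
  obtain ⟨-, -, chainβ⟩ := partials β βx βt hβ
    (fun x hx t ht => (hder x hx t ht).2.1) (fun x hx t ht => (hder x hx t ht).2.2.2)
  -- finite-time extinction of β
  have Bzero : ∀ x ∈ Icc (0:ℝ) 1, ∀ t : ℝ, Φ₂ x ≤ t → β x t = 0 := by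
    intro x hx t htx
    set τ : ℝ → ℝ := fun y => t - Φ₂ x + Φ₂ y with hτ
    set G : ℝ → ℝ := fun y => β y (τ y) with hG
    have hτ0 : ∀ y ∈ Icc x 1, (0:ℝ) ≤ τ y := by
      intro y hy
      have := hΦ₂nonneg hy.2
      simp only [hτ]; linarith
    have hmaps : MapsTo (fun y => (y, τ y)) (Icc x 1) S := by
      intro y hy
      exact ⟨⟨le_trans hx.1 hy.1, hy.2⟩, hτ0 y hy⟩
    have hGd : ∀ y ∈ Icc x 1, HasDerivWithinAt G 0 (Icc x 1) y := by
      intro y hy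
      have hy01 : y ∈ Icc (0:ℝ) 1 := ⟨le_trans hx.1 hy.1, hy.2⟩
      have hτd : HasDerivWithinAt τ (-(ε₂ y)⁻¹) (Icc x 1) y := by
        have h1 : HasDerivAt (fun z => t - Φ₂ x + Φ₂ z) (-f₂ y) y :=
          (hΦ₂d y).const_add _
        have h2 : f₂ y = (ε₂ y)⁻¹ := by simp only [hf₂]; rw [proj_eq hy01]
        rw [h2] at h1
        exact h1.hasDerivWithinAt
      have hc := chainβ (Icc x 1) (fun y => y) τ 1 (-(ε₂ y)⁻¹) y hy hmaps
        (hasDerivWithinAt_id y _) hτd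
      have hval : βx y (τ y) * 1 + βt y (τ y) * (-(ε₂ y)⁻¹) = 0 := by
        have hp := (hpde y hy01 (τ y) (hτ0 y hy)).2
        rw [hp]
        have : ε₂ y ≠ 0 := ne_of_gt (hε₂pos y hy01)
        field_simp
        ring
      rw [hval] at hc
      exact hc
    have hGc : ContinuousOn G (Icc x 1) := by
      have h1 : Continuous (fun y => (y, τ y)) := continuous_id.prodMk (by continuity)
      exact (hβ.continuousOn.comp h1.continuousOn hmaps)
    have hconst := constant_of_has_deriv_right_zero hGc (fun y hy =>
      (hGd y (mem_Icc_of_Ico hy)).mono_of_mem_nhdsWithin (Icc_mem_nhdsGE_of_mem hy))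
    have h1mem : (1:ℝ) ∈ Icc x 1 := ⟨hx.2, le_refl 1⟩
    have hG1 : G 1 = G x := hconst 1 h1mem
    have hτ1 : (0:ℝ) ≤ τ 1 := hτ0 1 h1mem
    have hb1 : G 1 = 0 := (hbc (τ 1) hτ1).2
    have hGx : G x = β x t := by
      show β x (t - Φ₂ x + Φ₂ x) = β x t
      congr 1
      ring
    rw [hGx, hb1] at hG1
    exact hG1.symm
  -- finite-time extinction of α
  have Azero : ∀ x ∈ Icc (0:ℝ) 1, ∀ t : ℝ, Φ₁ x + Φ₂ 0 ≤ t → α x t = 0 := by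
    intro x hx t htx
    set τ : ℝ → ℝ := fun y => t - Φ₁ x + Φ₁ y with hτ
    set G : ℝ → ℝ := fun y => α y (τ y) with hG
    have hΦ₂00 : 0 ≤ Φ₂ 0 := hΦ₂nonneg zero_le_one
    have hτT : ∀ y ∈ Icc (0:ℝ) x, Φ₂ 0 ≤ τ y := by
      intro y hy
      have h1 : Φ₁ x ≤ t - Φ₂ 0 := by linarith
      have h2 : 0 ≤ Φ₁ y := hΦ₁nonneg hy.1
      simp only [hτ]; linarith
    have hτ0 : ∀ y ∈ Icc (0:ℝ) x, (0:ℝ) ≤ τ y := fun y hy => le_trans hΦ₂00 (hτT y hy)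
    have hmaps : MapsTo (fun y => (y, τ y)) (Icc 0 x) S := by
      intro y hy
      exact ⟨⟨hy.1, le_trans hy.2 hx.2⟩, hτ0 y hy⟩
    have hGd : ∀ y ∈ Icc (0:ℝ) x, HasDerivWithinAt G 0 (Icc 0 x) y := by
      intro y hy
      have hy01 : y ∈ Icc (0:ℝ) 1 := ⟨hy.1, le_trans hy.2 hx.2⟩
      have hτd : HasDerivWithinAt τ ((ε₁ y)⁻¹) (Icc 0 x) y := by
        have h1 : HasDerivAt (fun z => t - Φ₁ x + Φ₁ z) (f₁ y) y :=
          (hΦ₁d y).const_add _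
        have h2 : f₁ y = (ε₁ y)⁻¹ := by simp only [hf₁]; rw [proj_eq hy01]
        rw [h2] at h1
        exact h1.hasDerivWithinAt
      have hc := chainα (Icc 0 x) (fun y => y) τ 1 ((ε₁ y)⁻¹) y hy hmaps
        (hasDerivWithinAt_id y _) hτd
      have hβ0 : β 0 (τ y) = 0 :=
        Bzero 0 ⟨le_refl 0, zero_le_one⟩ (τ y) (hτT y hy)
      have hval : αx y (τ y) * 1 + αt y (τ y) * (ε₁ y)⁻¹ = 0 := by
        have hp := (hpde y hy01 (τ y) (hτ0 y hy)).1
        rw [hp, hβ0]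
        have : ε₁ y ≠ 0 := ne_of_gt (hε₁pos y hy01)
        field_simp
        ring
      rw [hval] at hc
      exact hc
    have hGc : ContinuousOn G (Icc 0 x) := by
      have h1 : Continuous (fun y => (y, τ y)) := continuous_id.prodMk (by continuity)
      exact (hα.continuousOn.comp h1.continuousOn hmaps)
    have hconst := constant_of_has_deriv_right_zero hGc (fun y hy =>
      (hGd y (mem_Icc_of_Ico hy)).mono_of_mem_nhdsWithin (Icc_mem_nhdsGE_of_mem hy))
    have hxmem : x ∈ Icc (0:ℝ) x := ⟨hx.1, le_refl x⟩
    have hGx : G x = G 0 := hconst x hxmem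
    have h0mem : (0:ℝ) ∈ Icc (0:ℝ) x := ⟨le_refl 0, hx.1⟩
    have hG0 : G 0 = 0 := by
      have hb := (hbc (τ 0) (hτ0 0 h0mem)).1
      have hβ0 : β 0 (τ 0) = 0 := Bzero 0 ⟨le_refl 0, zero_le_one⟩ (τ 0) (hτT 0 h0mem)
      show α 0 (τ 0) = 0
      rw [hb, hβ0, mul_zero]
    have hGxval : G x = α x t := by
      show α x (t - Φ₁ x + Φ₁ x) = α x t
      congr 1
      ring
    rw [hGxval, hG0] at hGx
    exact hGx
  -- identify the statement's extinction time
  have htF : (∫ ξ in (0:ℝ)..1, (1 / ε₁ ξ + 1 / ε₂ ξ)) = Φ₁ 1 + Φ₂ 0 := by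
    have hcongr : (∫ ξ in (0:ℝ)..1, (1 / ε₁ ξ + 1 / ε₂ ξ))
        = ∫ ξ in (0:ℝ)..1, (f₁ ξ + f₂ ξ) := by
      apply integral_congr
      intro ξ hξ
      have hξ' : ξ ∈ Icc (0:ℝ) 1 := by
        rwa [uIcc_of_le (by norm_num : (0:ℝ) ≤ 1)] at hξ
      simp [hf₁, hf₂, proj_eq hξ', one_div]
    rw [hcongr, integral_add (hf₁c.intervalIntegrable _ _) (hf₂c.intervalIntegrable _ _)]
  intro x hx t ht
  rw [htF] at ht
  have hΦ₁x : Φ₁ x ≤ Φ₁ 1 := hΦ₁mono hx.2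
  have hΦ₂x : Φ₂ x ≤ Φ₂ 0 := hΦ₂anti hx.1
  have hΦ₁1 : 0 ≤ Φ₁ 1 := hΦ₁nonneg zero_le_one
  constructor
  · exact Azero x hx t (by linarith)
  · exact Bzero x hx t (by linarith)

end CascadeAux2

namespace CascadeAux3
open CascadeAux Function intervalIntegral

lemma sliceCont {f : ℝ × ℝ → ℝ} (hf : ContinuousOn f S) {t : ℝ} (ht : 0 ≤ t) :
    ContinuousOn (fun ξ => f (ξ, t)) (Icc 0 1) :=
  hf.comp (continuous_id.prodMk continuous_const).continuousOn fun ξ hξ => ⟨hξ, ht⟩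

lemma timeCont {f : ℝ × ℝ → ℝ} (hf : ContinuousOn f S) {ξ : ℝ} (hξ : ξ ∈ Icc (0:ℝ) 1) :
    ContinuousOn (fun t => f (ξ, t)) (Ici 0) :=
  hf.comp (continuous_const.prodMk continuous_id).continuousOn fun t ht => ⟨hξ, ht⟩

lemma boundOn {f : ℝ × ℝ → ℝ} (hf : ContinuousOn f S) (T : ℝ) :
    ∃ M : ℝ, 0 ≤ M ∧ ∀ p ∈ Icc (0:ℝ) 1 ×ˢ Icc (0:ℝ) T, |f p| ≤ M := by
  have hcomp : IsCompact (Icc (0:ℝ) 1 ×ˢ Icc (0:ℝ) T) := isCompact_Icc.prod isCompact_Icc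
  have hsub : Icc (0:ℝ) 1 ×ˢ Icc (0:ℝ) T ⊆ S := fun p hp => ⟨hp.1, hp.2.1⟩
  obtain ⟨M, hM⟩ := hcomp.exists_bound_of_continuousOn (hf.mono hsub)
  exact ⟨max M 0, le_max_right _ _, fun p hp => le_trans (hM p hp) (le_max_left _ _)⟩

lemma hasDerivAt_L2 (f ft : ℝ → ℝ → ℝ) (hf : ContDiffOn ℝ 1 (uncurry f) S)
    (hftc : ContinuousOn (fun p : ℝ × ℝ => ft p.1 p.2) S)
    (hdt : ∀ x ∈ Icc (0:ℝ) 1, ∀ t ∈ Ici (0:ℝ),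
      HasDerivWithinAt (fun τ => f x τ) (ft x t) (Ici 0) t)
    {t₀ : ℝ} (ht₀ : 0 < t₀) :
    HasDerivAt (fun t => ∫ ξ in (0:ℝ)..1, (f ξ t)^2)
      (∫ ξ in (0:ℝ)..1, 2 * f ξ t₀ * ft ξ t₀) t₀ := by
  have hcf : ContinuousOn (uncurry f) S := hf.continuousOn
  obtain ⟨Mf, hMf0, hMf⟩ := boundOn hcf (2 * t₀)
  obtain ⟨Mt, hMt0, hMt⟩ := boundOn hftc (2 * t₀)
  have hmem : ∀ {t : ℝ}, t ∈ Metric.ball t₀ t₀ → t ∈ Icc 0 (2*t₀) := by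
    intro t ht
    rw [Metric.mem_ball, Real.dist_eq, abs_lt] at ht
    constructor <;> linarith [ht.1, ht.2]
  have hmem' : ∀ {t : ℝ}, t ∈ Metric.ball t₀ t₀ → (0:ℝ) < t := by
    intro t ht
    rw [Metric.mem_ball, Real.dist_eq, abs_lt] at ht
    linarith [ht.1]
  have key := hasDerivAt_integral_of_dominated_loc_of_deriv_le (μ := volume)
    (F := fun t ξ => (f ξ t)^2) (F' := fun t ξ => 2 * f ξ t * ft ξ t)
    (a := 0) (b := 1) (x₀ := t₀) (bound := fun _ => 2 * Mf * Mt) (Metric.ball_mem_nhds t₀ ht₀)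
    ?_ ?_ ?_ ?_ ?_ ?_
  · exact key.2
  · -- measurability of F t for t near t₀
    filter_upwards [isOpen_Ioi.mem_nhds ht₀] with t (ht : 0 < t)
    have : ContinuousOn (fun ξ => (f ξ t)^2) (uIoc 0 1) := by
      have := (sliceCont hcf ht.le)
      exact (this.mono (by rw [uIoc_of_le (zero_le_one)]; exact Ioc_subset_Icc_self)).pow 2
    exact this.aestronglyMeasurable measurableSet_uIoc
  · -- integrability of F t₀
    have : ContinuousOn (fun ξ => (f ξ t₀)^2) (uIcc 0 1) := by
      rw [uIcc_of_le zero_le_one]; exact (sliceCont hcf ht₀.le).pow 2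
    exact this.intervalIntegrable
  · -- measurability of F' t₀
    have : ContinuousOn (fun ξ => 2 * f ξ t₀ * ft ξ t₀) (uIoc 0 1) := by
      have h1 := sliceCont hcf ht₀.le
      have h2 := sliceCont hftc ht₀.le
      have : ContinuousOn (fun ξ => 2 * f ξ t₀ * ft ξ t₀) (Icc 0 1) :=
        (continuousOn_const.mul h1).mul h2
      exact this.mono (by rw [uIoc_of_le (zero_le_one)]; exact Ioc_subset_Icc_self)
    exact this.aestronglyMeasurable measurableSet_uIoc
  · -- bound
    refine Filter.Eventually.of_forall fun ξ => fun hξ t ht => ?_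
    have hξ' : ξ ∈ Icc (0:ℝ) 1 := by
      rw [uIoc_of_le (zero_le_one)] at hξ; exact Ioc_subset_Icc_self hξ
    have h1 : |f ξ t| ≤ Mf := hMf (ξ, t) ⟨hξ', hmem ht⟩
    have h2 : |ft ξ t| ≤ Mt := hMt (ξ, t) ⟨hξ', hmem ht⟩
    have : ‖2 * f ξ t * ft ξ t‖ = 2 * |f ξ t| * |ft ξ t| := by
      rw [Real.norm_eq_abs, abs_mul, abs_mul]; norm_num
    rw [this]
    show 2 * |f ξ t| * |ft ξ t| ≤ 2 * Mf * Mt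
    have h4 : |f ξ t| * |ft ξ t| ≤ Mf * Mt :=
      mul_le_mul h1 h2 (abs_nonneg _) hMf0
    linarith
  · exact intervalIntegrable_const
  · -- differentiability
    refine Filter.Eventually.of_forall fun ξ => fun hξ t ht => ?_
    have hξ' : ξ ∈ Icc (0:ℝ) 1 := by
      rw [uIoc_of_le (zero_le_one)] at hξ; exact Ioc_subset_Icc_self hξ
    have htpos : (0:ℝ) < t := hmem' ht
    have hd : HasDerivAt (fun τ => f ξ τ) (ft ξ t) t :=
      (hdt ξ hξ' t htpos.le).hasDerivAt
        (Filter.mem_of_superset (isOpen_Ioi.mem_nhds htpos) Ioi_subset_Ici_self)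
    have := hd.fun_pow 2
    refine this.congr_deriv ?_
    push_cast
    ring

lemma contOn_L2 (f : ℝ → ℝ → ℝ) (hcf : ContinuousOn (uncurry f) S) :
    ContinuousOn (fun t => ∫ ξ in (0:ℝ)..1, (f ξ t)^2) (Ici 0) := by
  intro t₀ ht₀
  obtain ⟨Mf, hMf0, hMf⟩ := boundOn hcf (t₀ + 1)
  apply intervalIntegral.continuousWithinAt_of_dominated_interval
    (bound := fun _ => Mf ^ 2)
  · filter_upwards [self_mem_nhdsWithin] with t (ht : t ∈ Ici (0:ℝ))
    have : ContinuousOn (fun ξ => (f ξ t)^2) (uIoc 0 1) :=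
      ((sliceCont hcf ht).pow 2).mono
        (by rw [uIoc_of_le (zero_le_one)]; exact Ioc_subset_Icc_self)
    exact this.aestronglyMeasurable measurableSet_uIoc
  · have hmem : Ici (0:ℝ) ∩ Iio (t₀ + 1) ∈ nhdsWithin t₀ (Ici 0) :=
      Filter.inter_mem self_mem_nhdsWithin
        (mem_nhdsWithin_of_mem_nhds (Iio_mem_nhds (lt_add_one t₀)))
    filter_upwards [hmem] with t ht
    refine Filter.Eventually.of_forall fun ξ => fun hξ => ?_
    have hξ' : ξ ∈ Icc (0:ℝ) 1 := by
      rw [uIoc_of_le (zero_le_one)] at hξ; exact Ioc_subset_Icc_self hξ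
    have h1 : |f ξ t| ≤ Mf := hMf (ξ, t) ⟨hξ', ht.1, (ht.2 : t < t₀ + 1).le⟩
    have h2 : ‖(f ξ t)^2‖ = |f ξ t|^2 := by rw [Real.norm_eq_abs, abs_pow]
    rw [h2]
    exact pow_le_pow_left₀ (abs_nonneg _) h1 2
  · exact intervalIntegrable_const
  · refine Filter.Eventually.of_forall fun ξ => fun hξ => ?_
    have hξ' : ξ ∈ Icc (0:ℝ) 1 := by
      rw [uIoc_of_le (zero_le_one)] at hξ; exact Ioc_subset_Icc_self hξ
    exact (((timeCont hcf hξ') t₀ ht₀).pow 2)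

end CascadeAux3

namespace CascadeAux4
open CascadeAux CascadeAux3 Function intervalIntegral

lemma hii {u : ℝ → ℝ} (h : ContinuousOn u (Icc 0 1)) : IntervalIntegrable u volume 0 1 := by
  apply ContinuousOn.intervalIntegrable
  rwa [uIcc_of_le zero_le_one]

theorem energy (ε₁ ε₂ : ℝ → ℝ) (g : ℝ → ℝ) (q : ℝ)
    (hε₁ : ContDiffOn ℝ 1 ε₁ (Icc 0 1)) (hε₂ : ContDiffOn ℝ 1 ε₂ (Icc 0 1))
    (hε₁pos : ∀ x ∈ Icc (0:ℝ) 1, 0 < ε₁ x) (hε₂pos : ∀ x ∈ Icc (0:ℝ) 1, 0 < ε₂ x)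
    (hg : ContinuousOn g (Icc 0 1)) :
    ∃ C : ℝ, 1 ≤ C ∧ ∃ K : ℝ, 0 ≤ K ∧
      ∀ (α β αx βx αt βt : ℝ → ℝ → ℝ),
        ContDiffOn ℝ 1 (Function.uncurry α) (Icc 0 1 ×ˢ Ici 0) →
        ContDiffOn ℝ 1 (Function.uncurry β) (Icc 0 1 ×ˢ Ici 0) →
        (∀ x ∈ Icc (0:ℝ) 1, ∀ t ∈ Ici (0:ℝ),
          HasDerivWithinAt (fun s => α s t) (αx x t) (Icc 0 1) x ∧
          HasDerivWithinAt (fun s => β s t) (βx x t) (Icc 0 1) x ∧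
          HasDerivWithinAt (fun τ => α x τ) (αt x t) (Ici 0) t ∧
          HasDerivWithinAt (fun τ => β x τ) (βt x t) (Ici 0) t) →
        (∀ x ∈ Icc (0:ℝ) 1, ∀ t ∈ Ici (0:ℝ),
          αt x t = -ε₁ x * αx x t + g x * β 0 t ∧ βt x t = ε₂ x * βx x t) →
        (∀ t ∈ Ici (0:ℝ), α 0 t = q * β 0 t ∧ β 1 t = 0) →
        ∀ t ∈ Ici (0:ℝ),
          (∫ ξ in (0:ℝ)..1, ((α ξ t) ^ 2 + (β ξ t) ^ 2)) ≤
            C * Real.exp (K * t) * (∫ ξ in (0:ℝ)..1, ((α ξ 0) ^ 2 + (β ξ 0) ^ 2)) := by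
  have hu : UniqueDiffOn ℝ (Icc (0:ℝ) 1) := uniqueDiffOn_Icc one_pos
  have h0mem : (0:ℝ) ∈ Icc (0:ℝ) 1 := ⟨le_refl 0, zero_le_one⟩
  have h1mem : (1:ℝ) ∈ Icc (0:ℝ) 1 := ⟨zero_le_one, le_refl 1⟩
  set d₁ := derivWithin ε₁ (Icc 0 1) with hd₁
  set d₂ := derivWithin ε₂ (Icc 0 1) with hd₂
  have hd₁c : ContinuousOn d₁ (Icc 0 1) := hε₁.continuousOn_derivWithin hu le_rfl
  have hd₂c : ContinuousOn d₂ (Icc 0 1) := hε₂.continuousOn_derivWithin hu le_rfl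
  obtain ⟨K₁, hK₁⟩ := isCompact_Icc.exists_bound_of_continuousOn hd₁c
  obtain ⟨K₂, hK₂⟩ := isCompact_Icc.exists_bound_of_continuousOn hd₂c
  have hK₁0 : 0 ≤ K₁ := le_trans (norm_nonneg _) (hK₁ 0 h0mem)
  have hK₂0 : 0 ≤ K₂ := le_trans (norm_nonneg _) (hK₂ 0 h0mem)
  set G := ∫ ξ in (0:ℝ)..1, (g ξ)^2 with hGdef
  have hG0 : 0 ≤ G := integral_nonneg zero_le_one fun ξ _ => sq_nonneg _
  have he10 : 0 < ε₁ 0 := hε₁pos 0 h0mem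
  have he20 : 0 < ε₂ 0 := hε₂pos 0 h0mem
  have he11 : 0 < ε₁ 1 := hε₁pos 1 h1mem
  have he21 : 0 < ε₂ 1 := hε₂pos 1 h1mem
  set μ := (ε₁ 0 * q^2 + G + 1) / ε₂ 0 with hμdef
  have hnum : 0 < ε₁ 0 * q^2 + G + 1 := by nlinarith [sq_nonneg q, mul_nonneg he10.le (sq_nonneg q)]
  have hμpos : 0 < μ := div_pos hnum he20
  have hμe : μ * ε₂ 0 = ε₁ 0 * q^2 + G + 1 := div_mul_cancel₀ _ (ne_of_gt he20)
  set K := K₁ + K₂ + 1 with hKdef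
  have hKpos : 0 ≤ K := by positivity
  set m := min 1 μ with hmdef
  set M := max 1 μ with hMdef
  have hm : 0 < m := lt_min one_pos hμpos
  have hMm : m ≤ M := min_le_max
  have hM1 : 1 ≤ M := le_max_left _ _
  refine ⟨M / m, (one_le_div hm).2 min_le_max, K, hKpos, ?_⟩
  intro α β αx βx αt βt hα hβ hder hpde hbc t ht
  obtain ⟨cαx, cαt, chainα⟩ := partials α αx αt hα
    (fun x hx t ht => (hder x hx t ht).1) (fun x hx t ht => (hder x hx t ht).2.2.1)
  obtain ⟨cβx, cβt, chainβ⟩ := partials β βx βt hβ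
    (fun x hx t ht => (hder x hx t ht).2.1) (fun x hx t ht => (hder x hx t ht).2.2.2)
  have hcα : ContinuousOn (uncurry α) S := hα.continuousOn
  have hcβ : ContinuousOn (uncurry β) S := hβ.continuousOn
  set A : ℝ → ℝ := fun τ => ∫ ξ in (0:ℝ)..1, (α ξ τ)^2 with hA
  set B : ℝ → ℝ := fun τ => ∫ ξ in (0:ℝ)..1, (β ξ τ)^2 with hB
  have sα : ∀ {τ : ℝ}, 0 ≤ τ → ContinuousOn (fun ξ => α ξ τ) (Icc 0 1) :=
    fun hτ => sliceCont hcα hτ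
  have sβ : ∀ {τ : ℝ}, 0 ≤ τ → ContinuousOn (fun ξ => β ξ τ) (Icc 0 1) :=
    fun hτ => sliceCont hcβ hτ
  have sαx : ∀ {τ : ℝ}, 0 ≤ τ → ContinuousOn (fun ξ => αx ξ τ) (Icc 0 1) :=
    fun hτ => sliceCont cαx hτ
  have sβx : ∀ {τ : ℝ}, 0 ≤ τ → ContinuousOn (fun ξ => βx ξ τ) (Icc 0 1) :=
    fun hτ => sliceCont cβx hτ
  have sαt : ∀ {τ : ℝ}, 0 ≤ τ → ContinuousOn (fun ξ => αt ξ τ) (Icc 0 1) :=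
    fun hτ => sliceCont cαt hτ
  have sβt : ∀ {τ : ℝ}, 0 ≤ τ → ContinuousOn (fun ξ => βt ξ τ) (Icc 0 1) :=
    fun hτ => sliceCont cβt hτ
  have hA0 : ∀ τ, 0 ≤ A τ := fun τ => integral_nonneg zero_le_one fun ξ _ => sq_nonneg _
  have hB0 : ∀ τ, 0 ≤ B τ := fun τ => integral_nonneg zero_le_one fun ξ _ => sq_nonneg _
  have hAd : ∀ {τ : ℝ}, 0 < τ →
      HasDerivAt A (∫ ξ in (0:ℝ)..1, 2 * α ξ τ * αt ξ τ) τ :=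
    fun hτ => hasDerivAt_L2 α αt hα cαt (fun x hx t ht => (hder x hx t ht).2.2.1) hτ
  have hBd : ∀ {τ : ℝ}, 0 < τ →
      HasDerivAt B (∫ ξ in (0:ℝ)..1, 2 * β ξ τ * βt ξ τ) τ :=
    fun hτ => hasDerivAt_L2 β βt hβ cβt (fun x hx t ht => (hder x hx t ht).2.2.2) hτ
  -- the key differential inequality
  have bound : ∀ {τ : ℝ}, 0 < τ →
      (∫ ξ in (0:ℝ)..1, 2 * α ξ τ * αt ξ τ) + μ * (∫ ξ in (0:ℝ)..1, 2 * β ξ τ * βt ξ τ)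
        ≤ K * (A τ + μ * B τ) := by
    intro τ hτ
    have htm : (0:ℝ) ≤ τ := hτ.le
    -- integration by parts for β
    have ftcβ : (∫ ξ in (0:ℝ)..1, (d₂ ξ * (β ξ τ)^2 + ε₂ ξ * (2 * β ξ τ * βx ξ τ)))
        = ε₂ 1 * (β 1 τ)^2 - ε₂ 0 * (β 0 τ)^2 := by
      apply integral_eq_sub_of_hasDeriv_right_of_le (f := fun ξ => ε₂ ξ * (β ξ τ)^2)
        (f' := fun ξ => d₂ ξ * (β ξ τ)^2 + ε₂ ξ * (2 * β ξ τ * βx ξ τ)) zero_le_one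
      · exact hε₂.continuousOn.mul ((sβ htm).pow 2)
      · intro ξ hξ
        have hξ' : ξ ∈ Icc (0:ℝ) 1 := Ioo_subset_Icc_self hξ
        have h1 : HasDerivWithinAt ε₂ (d₂ ξ) (Icc 0 1) ξ :=
          ((hε₂.differentiableOn one_ne_zero) ξ hξ').hasDerivWithinAt
        have h2 : HasDerivWithinAt (fun s => (β s τ)^2) (2 * β ξ τ * βx ξ τ) (Icc 0 1) ξ := by
          have := ((hder ξ hξ' τ htm).2.1).fun_pow 2
          refine this.congr_deriv ?_
          push_cast; ring
        exact (h1.mul h2).mono_of_mem_nhdsWithin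
          (Icc_mem_nhdsGT_of_mem ⟨hξ.1.le, hξ.2⟩)
      · exact hii ((hd₂c.mul ((sβ htm).pow 2)).add
          (hε₂.continuousOn.mul ((continuousOn_const.mul (sβ htm)).mul (sβx htm))))
    have i1 : IntervalIntegrable
        (fun ξ => d₂ ξ * (β ξ τ)^2 + ε₂ ξ * (2 * β ξ τ * βx ξ τ)) volume 0 1 :=
      hii ((hd₂c.mul ((sβ htm).pow 2)).add
        (hε₂.continuousOn.mul ((continuousOn_const.mul (sβ htm)).mul (sβx htm))))
    have i2 : IntervalIntegrable (fun ξ => d₂ ξ * (β ξ τ)^2) volume 0 1 :=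
      hii (hd₂c.mul ((sβ htm).pow 2))
    have hBval : (∫ ξ in (0:ℝ)..1, 2 * β ξ τ * βt ξ τ)
        = (ε₂ 1 * (β 1 τ)^2 - ε₂ 0 * (β 0 τ)^2) - ∫ ξ in (0:ℝ)..1, d₂ ξ * (β ξ τ)^2 := by
      have hcongr : ∀ ξ ∈ uIcc (0:ℝ) 1, 2 * β ξ τ * βt ξ τ
          = (d₂ ξ * (β ξ τ)^2 + ε₂ ξ * (2 * β ξ τ * βx ξ τ)) - d₂ ξ * (β ξ τ)^2 := by
        intro ξ hξ
        rw [uIcc_of_le zero_le_one] at hξ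
        rw [(hpde ξ hξ τ htm).2]; ring
      rw [integral_congr hcongr, integral_sub i1 i2, ftcβ]
    have hB'le : (∫ ξ in (0:ℝ)..1, 2 * β ξ τ * βt ξ τ)
        ≤ -(ε₂ 0) * (β 0 τ)^2 + K₂ * B τ := by
      rw [hBval, (hbc τ htm).2]
      have h5 : (∫ ξ in (0:ℝ)..1, -(d₂ ξ * (β ξ τ)^2))
          ≤ ∫ ξ in (0:ℝ)..1, K₂ * (β ξ τ)^2 := by
        apply integral_mono_on zero_le_one
          (hii ((hd₂c.mul ((sβ htm).pow 2)).neg))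
          (hii (continuousOn_const.mul ((sβ htm).pow 2)))
        intro ξ hξ
        have habs : |d₂ ξ| ≤ K₂ := by
          have := hK₂ ξ hξ; rwa [Real.norm_eq_abs] at this
        show -(d₂ ξ * (β ξ τ)^2) ≤ K₂ * (β ξ τ)^2
        nlinarith [sq_nonneg (β ξ τ), abs_le.1 habs]
      rw [intervalIntegral.integral_neg, intervalIntegral.integral_const_mul] at h5
      have : (0:ℝ)^2 * ε₂ 1 = 0 := by ring
      simp only [hB] at h5 ⊢
      nlinarith [h5]
    -- integration by parts for α
    have ftcα : (∫ ξ in (0:ℝ)..1, (d₁ ξ * (α ξ τ)^2 + ε₁ ξ * (2 * α ξ τ * αx ξ τ)))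
        = ε₁ 1 * (α 1 τ)^2 - ε₁ 0 * (α 0 τ)^2 := by
      apply integral_eq_sub_of_hasDeriv_right_of_le (f := fun ξ => ε₁ ξ * (α ξ τ)^2)
        (f' := fun ξ => d₁ ξ * (α ξ τ)^2 + ε₁ ξ * (2 * α ξ τ * αx ξ τ)) zero_le_one
      · exact hε₁.continuousOn.mul ((sα htm).pow 2)
      · intro ξ hξ
        have hξ' : ξ ∈ Icc (0:ℝ) 1 := Ioo_subset_Icc_self hξ
        have h1 : HasDerivWithinAt ε₁ (d₁ ξ) (Icc 0 1) ξ :=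
          ((hε₁.differentiableOn one_ne_zero) ξ hξ').hasDerivWithinAt
        have h2 : HasDerivWithinAt (fun s => (α s τ)^2) (2 * α ξ τ * αx ξ τ) (Icc 0 1) ξ := by
          have := ((hder ξ hξ' τ htm).1).fun_pow 2
          refine this.congr_deriv ?_
          push_cast; ring
        exact (h1.mul h2).mono_of_mem_nhdsWithin
          (Icc_mem_nhdsGT_of_mem ⟨hξ.1.le, hξ.2⟩)
      · exact hii ((hd₁c.mul ((sα htm).pow 2)).add
          (hε₁.continuousOn.mul ((continuousOn_const.mul (sα htm)).mul (sαx htm))))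
    have hAval : (∫ ξ in (0:ℝ)..1, 2 * α ξ τ * αt ξ τ)
        = -(ε₁ 1 * (α 1 τ)^2 - ε₁ 0 * (α 0 τ)^2)
          + ∫ ξ in (0:ℝ)..1, (d₁ ξ * (α ξ τ)^2 + 2 * g ξ * α ξ τ * β 0 τ) := by
      have hcongr : ∀ ξ ∈ uIcc (0:ℝ) 1, 2 * α ξ τ * αt ξ τ
          = -((d₁ ξ * (α ξ τ)^2 + ε₁ ξ * (2 * α ξ τ * αx ξ τ)))
            + (d₁ ξ * (α ξ τ)^2 + 2 * g ξ * α ξ τ * β 0 τ) := by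
        intro ξ hξ
        rw [uIcc_of_le zero_le_one] at hξ
        rw [(hpde ξ hξ τ htm).1]; ring
      have j1 : IntervalIntegrable
          (fun ξ => -(d₁ ξ * (α ξ τ)^2 + ε₁ ξ * (2 * α ξ τ * αx ξ τ))) volume 0 1 :=
        (hii ((hd₁c.mul ((sα htm).pow 2)).add
          (hε₁.continuousOn.mul ((continuousOn_const.mul (sα htm)).mul (sαx htm))))).neg
      have j2 : IntervalIntegrable
          (fun ξ => d₁ ξ * (α ξ τ)^2 + 2 * g ξ * α ξ τ * β 0 τ) volume 0 1 :=
        hii ((hd₁c.mul ((sα htm).pow 2)).add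
          (((continuousOn_const.mul hg).mul (sα htm)).mul continuousOn_const))
      rw [integral_congr hcongr, integral_add j1 j2, intervalIntegral.integral_neg, ftcα]
    have hA'le : (∫ ξ in (0:ℝ)..1, 2 * α ξ τ * αt ξ τ)
        ≤ ε₁ 0 * q^2 * (β 0 τ)^2 + (K₁ + 1) * A τ + G * (β 0 τ)^2 := by
      rw [hAval]
      have hbd : (∫ ξ in (0:ℝ)..1, (d₁ ξ * (α ξ τ)^2 + 2 * g ξ * α ξ τ * β 0 τ))
          ≤ ∫ ξ in (0:ℝ)..1, (K₁ * (α ξ τ)^2 + ((β 0 τ)^2 * (g ξ)^2 + (α ξ τ)^2)) := by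
        apply integral_mono_on zero_le_one
          (hii ((hd₁c.mul ((sα htm).pow 2)).add
            (((continuousOn_const.mul hg).mul (sα htm)).mul continuousOn_const)))
          (hii ((continuousOn_const.mul ((sα htm).pow 2)).add
            ((continuousOn_const.mul (hg.pow 2)).add ((sα htm).pow 2))))
        intro ξ hξ
        have habs : |d₁ ξ| ≤ K₁ := by
          have := hK₁ ξ hξ; rwa [Real.norm_eq_abs] at this
        show d₁ ξ * (α ξ τ)^2 + 2 * g ξ * α ξ τ * β 0 τ ≤ K₁ * (α ξ τ)^2 + ((β 0 τ)^2 * (g ξ)^2 + (α ξ τ)^2)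
        nlinarith [sq_nonneg (α ξ τ), abs_le.1 habs, sq_nonneg (g ξ * β 0 τ - α ξ τ)]
      have hsplit : (∫ ξ in (0:ℝ)..1, (K₁ * (α ξ τ)^2 + ((β 0 τ)^2 * (g ξ)^2 + (α ξ τ)^2)))
          = K₁ * A τ + ((β 0 τ)^2 * G + A τ) := by
        rw [integral_add (f := fun ξ => K₁ * (α ξ τ)^2) (g := fun ξ => (β 0 τ)^2 * (g ξ)^2 + (α ξ τ)^2) (hii (continuousOn_const.mul ((sα htm).pow 2)))
            (hii ((continuousOn_const.mul (hg.pow 2)).add ((sα htm).pow 2))),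
          integral_add (f := fun ξ => (β 0 τ)^2 * (g ξ)^2) (g := fun ξ => (α ξ τ)^2) (hii (continuousOn_const.mul (hg.pow 2))) (hii ((sα htm).pow 2)),
          intervalIntegral.integral_const_mul, intervalIntegral.integral_const_mul]
      have hbcα : α 0 τ = q * β 0 τ := (hbc τ htm).1
      have h1sq : 0 ≤ ε₁ 1 * (α 1 τ)^2 := mul_nonneg he11.le (sq_nonneg _)
      rw [hsplit] at hbd
      have : ε₁ 0 * (α 0 τ)^2 = ε₁ 0 * q^2 * (β 0 τ)^2 := by rw [hbcα]; ring
      nlinarith [hbd]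
    -- combine
    have h6 := mul_le_mul_of_nonneg_left hB'le hμpos.le
    have hμB : 0 ≤ μ * B τ := mul_nonneg hμpos.le (hB0 τ)
    have hsq : 0 ≤ (β 0 τ)^2 := sq_nonneg _
    nlinarith [hA'le, h6, hμe, hA0 τ, hμB, hsq, hK₁0, hK₂0,
      mul_nonneg hμB hK₁0]
  -- Gronwall via antitonicity of t ↦ E t * exp (-K t)
  have hEc : ContinuousOn (fun τ => A τ + μ * B τ) (Ici 0) :=
    (contOn_L2 α hcα).add (continuousOn_const.mul (contOn_L2 β hcβ))
  have hE : A t + μ * B t ≤ (A 0 + μ * B 0) * Real.exp (K * t) := by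
    rcases eq_or_lt_of_le (Set.mem_Ici.mp ht) with heq | hlt
    · rw [← heq]
      simp
    · set L : ℝ → ℝ := fun τ => (A τ + μ * B τ) * Real.exp (-K * τ) with hL
      have hLd : ∀ τ ∈ Ioo (0:ℝ) t, HasDerivAt L
          ((((∫ ξ in (0:ℝ)..1, 2 * α ξ τ * αt ξ τ)
            + μ * (∫ ξ in (0:ℝ)..1, 2 * β ξ τ * βt ξ τ)) - K * (A τ + μ * B τ))
            * Real.exp (-K * τ)) τ := by
        intro τ hτ
        have hEd : HasDerivAt (fun τ => A τ + μ * B τ)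
            ((∫ ξ in (0:ℝ)..1, 2 * α ξ τ * αt ξ τ)
              + μ * (∫ ξ in (0:ℝ)..1, 2 * β ξ τ * βt ξ τ)) τ :=
          (hAd hτ.1).add ((hBd hτ.1).const_mul μ)
        have h1 : HasDerivAt (fun τ : ℝ => -K * τ) (-K) τ := by
          simpa using (hasDerivAt_id τ).const_mul (-K)
        have hexp := h1.exp
        have := hEd.fun_mul hexp
        refine this.congr_deriv ?_
        ring
      have hanti : AntitoneOn L (Icc 0 t) := by
        apply antitoneOn_of_deriv_nonpos (convex_Icc 0 t)
        · exact (hEc.mono Icc_subset_Ici_self).mul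
            (Real.continuous_exp.comp (continuous_const.mul continuous_id)).continuousOn
        · rw [interior_Icc]
          intro τ hτ
          exact ((hLd τ hτ).differentiableAt).differentiableWithinAt
        · rw [interior_Icc]
          intro τ hτ
          rw [(hLd τ hτ).deriv]
          have hb := bound hτ.1
          have he := Real.exp_pos (-K * τ)
          nlinarith
      have h0m : (0:ℝ) ∈ Icc (0:ℝ) t := ⟨le_refl 0, ht⟩
      have htm2 : t ∈ Icc (0:ℝ) t := ⟨ht, le_refl t⟩
      have hLle : L t ≤ L 0 := hanti h0m htm2 ht
      have hL0 : L 0 = A 0 + μ * B 0 := by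
        simp [hL]
      have hLt : L t = (A t + μ * B t) * Real.exp (-K * t) := rfl
      rw [hLt, hL0] at hLle
      have hkey := mul_le_mul_of_nonneg_right hLle (Real.exp_pos (K * t)).le
      have hee : Real.exp (-K * t) * Real.exp (K * t) = 1 := by
        rw [← Real.exp_add]; norm_num
      calc A t + μ * B t = (A t + μ * B t) * (Real.exp (-K * t) * Real.exp (K * t)) := by
            rw [hee, mul_one]
        _ = (A t + μ * B t) * Real.exp (-K * t) * Real.exp (K * t) := by ring
        _ ≤ (A 0 + μ * B 0) * Real.exp (K * t) := hkey
  -- assemble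
  have hNsplit : ∀ {τ : ℝ}, 0 ≤ τ →
      (∫ ξ in (0:ℝ)..1, ((α ξ τ)^2 + (β ξ τ)^2)) = A τ + B τ := by
    intro τ hτ
    exact integral_add (hii ((sα hτ).pow 2)) (hii ((sβ hτ).pow 2))
  rw [hNsplit ht, hNsplit (le_refl 0)]
  have hmle1 : m ≤ 1 := min_le_left _ _
  have hmleμ : m ≤ μ := min_le_right _ _
  have hM1' : (1:ℝ) ≤ M := le_max_left _ _
  have hMμ : μ ≤ M := le_max_right _ _
  have hexp : 0 < Real.exp (K * t) := Real.exp_pos _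
  -- m * (A t + B t) ≤ A t + μ * B t
  have hlow : m * (A t + B t) ≤ A t + μ * B t := by
    nlinarith [hA0 t, hB0 t]
  have hhigh : A 0 + μ * B 0 ≤ M * (A 0 + B 0) := by
    nlinarith [hA0 0, hB0 0]
  have hNt : m * (A t + B t) ≤ M * (A 0 + B 0) * Real.exp (K * t) := by
    calc m * (A t + B t) ≤ A t + μ * B t := hlow
      _ ≤ (A 0 + μ * B 0) * Real.exp (K * t) := hE
      _ ≤ M * (A 0 + B 0) * Real.exp (K * t) :=
          mul_le_mul_of_nonneg_right hhigh hexp.le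
  rw [div_mul_eq_mul_div, div_mul_eq_mul_div, le_div_iff₀ hm]
  nlinarith [hNt]

end CascadeAux4

open MeasureTheory Set

/-- Stability of the modified (cascade) target system used when q = 0
(Section 3.5): exponential L² decay with constant depending only on the
data, and finite-time extinction. -/
theorem cascade_target_system_stability
    (ε₁ ε₂ : ℝ → ℝ) (g : ℝ → ℝ) (q : ℝ)
    (hε₁ : ContDiffOn ℝ 1 ε₁ (Icc 0 1)) (hε₂ : ContDiffOn ℝ 1 ε₂ (Icc 0 1))
    (hε₁pos : ∀ x ∈ Icc (0:ℝ) 1, 0 < ε₁ x) (hε₂pos : ∀ x ∈ Icc (0:ℝ) 1, 0 < ε₂ x)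
    (hg : ContinuousOn g (Icc 0 1)) :
    ∀ lam > (0:ℝ), ∃ c > (0:ℝ),
      ∀ (α β αx βx αt βt : ℝ → ℝ → ℝ),
        ContDiffOn ℝ 1 (Function.uncurry α) (Icc 0 1 ×ˢ Ici 0) →
        ContDiffOn ℝ 1 (Function.uncurry β) (Icc 0 1 ×ˢ Ici 0) →
        (∀ x ∈ Icc (0:ℝ) 1, ∀ t ∈ Ici (0:ℝ),
          HasDerivWithinAt (fun s => α s t) (αx x t) (Icc 0 1) x ∧
          HasDerivWithinAt (fun s => β s t) (βx x t) (Icc 0 1) x ∧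
          HasDerivWithinAt (fun τ => α x τ) (αt x t) (Ici 0) t ∧
          HasDerivWithinAt (fun τ => β x τ) (βt x t) (Ici 0) t) →
        -- the cascade system α_t = -ε₁ α_x + g(x) β(0,t), β_t = ε₂ β_x
        (∀ x ∈ Icc (0:ℝ) 1, ∀ t ∈ Ici (0:ℝ),
          αt x t = -ε₁ x * αx x t + g x * β 0 t ∧ βt x t = ε₂ x * βx x t) →
        -- boundary conditions
        (∀ t ∈ Ici (0:ℝ), α 0 t = q * β 0 t ∧ β 1 t = 0) →
        (∀ t ∈ Ici (0:ℝ),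
          Real.sqrt (∫ ξ in (0:ℝ)..1, ((α ξ t) ^ 2 + (β ξ t) ^ 2)) ≤
            c * Real.exp (-lam * t) *
              Real.sqrt (∫ ξ in (0:ℝ)..1, ((α ξ 0) ^ 2 + (β ξ 0) ^ 2))) ∧
        (∀ x ∈ Icc (0:ℝ) 1, ∀ t : ℝ,
          (∫ ξ in (0:ℝ)..1, (1 / ε₁ ξ + 1 / ε₂ ξ)) ≤ t →
          α x t = 0 ∧ β x t = 0) := by
  obtain ⟨C, hC1, K, hK0, hEn⟩ := CascadeAux4.energy ε₁ ε₂ g q hε₁ hε₂ hε₁pos hε₂pos hg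
  have hC0 : 0 < C := lt_of_lt_of_le one_pos hC1
  intro lam hlam
  set tF := ∫ ξ in (0:ℝ)..1, (1 / ε₁ ξ + 1 / ε₂ ξ) with htFdef
  have htF0 : 0 ≤ tF := by
    apply intervalIntegral.integral_nonneg zero_le_one
    intro ξ hξ
    have h1 := hε₁pos ξ hξ
    have h2 := hε₂pos ξ hξ
    positivity
  set c := Real.sqrt C * Real.exp ((K / 2 + lam) * tF) with hcdef
  have hc : 0 < c := mul_pos (Real.sqrt_pos.2 hC0) (Real.exp_pos _)
  refine ⟨c, hc, ?_⟩
  intro α β αx βx αt βt hα hβ hder hpde hbc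
  have hext := CascadeAux2.extinction ε₁ ε₂ g q hε₁.continuousOn hε₂.continuousOn
    hε₁pos hε₂pos α β αx βx αt βt hα hβ hder hpde hbc
  constructor
  · intro t ht
    have hN0 : 0 ≤ ∫ ξ in (0:ℝ)..1, ((α ξ 0) ^ 2 + (β ξ 0) ^ 2) :=
      intervalIntegral.integral_nonneg zero_le_one
        fun ξ _ => add_nonneg (sq_nonneg _) (sq_nonneg _)
    by_cases hcase : t ≤ tF
    · have hE := hEn α β αx βx αt βt hα hβ hder hpde hbc t ht
      have h1 := Real.sqrt_le_sqrt hE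
      refine le_trans h1 ?_
      rw [Real.sqrt_mul (by positivity) _, Real.sqrt_mul hC0.le _, ← Real.exp_half]
      have hle : Real.sqrt C * Real.exp (K * t / 2) ≤ c * Real.exp (-lam * t) := by
        rw [hcdef, mul_assoc, ← Real.exp_add]
        apply mul_le_mul_of_nonneg_left _ (Real.sqrt_nonneg C)
        apply Real.exp_le_exp.2
        have : 0 ≤ lam * (tF - t) := mul_nonneg hlam.le (by linarith)
        have : K * t ≤ K * tF := mul_le_mul_of_nonneg_left hcase hK0
        nlinarith [hlam.le, htF0]
      exact mul_le_mul_of_nonneg_right hle (Real.sqrt_nonneg _)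
    · push_neg at hcase
      have hzero : (∫ ξ in (0:ℝ)..1, ((α ξ t) ^ 2 + (β ξ t) ^ 2)) = 0 := by
        have hcongr : ∀ ξ ∈ uIcc (0:ℝ) 1, (α ξ t) ^ 2 + (β ξ t) ^ 2 = 0 := by
          intro ξ hξ
          rw [uIcc_of_le zero_le_one] at hξ
          obtain ⟨ha, hb⟩ := hext ξ hξ t hcase.le
          rw [ha, hb]; ring
        rw [intervalIntegral.integral_congr hcongr]
        simp
      rw [hzero, Real.sqrt_zero]
      positivity
  · exact hext
end

section
/- Characteristic curves remain in the triangle (unnamed lemma in Appendix A, case i = 2): Let (x,ξ) ∈ T, set z := φ₃⁻¹(φ₁(x) + φ₂(ξ)) and s₂^F := φ₁(x) − φ₁(z), and for s ∈ [0, s₂^F] set x₂(s) := φ₁⁻¹(φ₁(z) + s) and ξ₂(s) := φ₂⁻¹(φ₂(z) − s). Then s₂^F ≥ 0 and for every s ∈ [0, s₂^F] one has 0 ≤ ξ₂(s) ≤ x₂(s) ≤ x and ξ₂(s) ≥ ξ; in particular (x₂(s), ξ₂(s)) ∈ T. -/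
open MeasureTheory Set

/-- `φ(ε)(x) = ∫₀ˣ dz/ε(z)`. -/
noncomputable def phiInt (ε : ℝ → ℝ) (x : ℝ) : ℝ := ∫ z in (0:ℝ)..x, 1 / ε z

lemma phiInt_lt (ε : ℝ → ℝ) (hε : ContinuousOn ε (Icc 0 1))
    (hpos : ∀ x ∈ Icc (0:ℝ) 1, 0 < ε x) {a b : ℝ}
    (ha : 0 ≤ a) (hab : a < b) (hb : b ≤ 1) : phiInt ε a < phiInt ε b := by
  have hsub : Icc a b ⊆ Icc (0:ℝ) 1 := Icc_subset_Icc ha hb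
  have hcont : ContinuousOn (fun z => 1 / ε z) (Icc a b) := by
    apply ContinuousOn.div continuousOn_const (hε.mono hsub)
    exact fun z hz => ne_of_gt (hpos z (hsub hz))
  have hint : IntervalIntegrable (fun z => 1 / ε z) volume a b := by
    apply ContinuousOn.intervalIntegrable
    rwa [uIcc_of_le hab.le]
  have hint0a : IntervalIntegrable (fun z => 1 / ε z) volume 0 a := by
    apply ContinuousOn.intervalIntegrable
    rw [uIcc_of_le ha]
    apply ContinuousOn.div continuousOn_const
      (hε.mono (Icc_subset_Icc le_rfl (hab.le.trans hb)))
    exact fun z hz => ne_of_gt (hpos z (Icc_subset_Icc le_rfl (hab.le.trans hb) hz))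
  have hint0b : IntervalIntegrable (fun z => 1 / ε z) volume 0 b := by
    apply ContinuousOn.intervalIntegrable
    rw [uIcc_of_le (ha.trans hab.le)]
    apply ContinuousOn.div continuousOn_const (hε.mono (Icc_subset_Icc le_rfl hb))
    exact fun z hz => ne_of_gt (hpos z (Icc_subset_Icc le_rfl hb hz))
  have hkey : phiInt ε b - phiInt ε a = ∫ z in a..b, 1 / ε z := by
    unfold phiInt
    rw [intervalIntegral.integral_interval_sub_left hint0b hint0a]
  have hposI : 0 < ∫ z in a..b, 1 / ε z := by
    apply intervalIntegral.intervalIntegral_pos_of_pos_on hint _ hab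
    intro z hz
    exact div_pos one_pos (hpos z (hsub ⟨hz.1.le, hz.2.le⟩))
  linarith

lemma phiInt_mono (ε : ℝ → ℝ) (hε : ContinuousOn ε (Icc 0 1))
    (hpos : ∀ x ∈ Icc (0:ℝ) 1, 0 < ε x) {a b : ℝ}
    (ha : 0 ≤ a) (hab : a ≤ b) (hb : b ≤ 1) : phiInt ε a ≤ phiInt ε b := by
  rcases eq_or_lt_of_le hab with h | h
  · rw [h]
  · exact (phiInt_lt ε hε hpos ha h hb).le

lemma phiInt_le_rev (ε : ℝ → ℝ) (hε : ContinuousOn ε (Icc 0 1))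
    (hpos : ∀ x ∈ Icc (0:ℝ) 1, 0 < ε x) {a b : ℝ}
    (ha : a ∈ Icc (0:ℝ) 1) (hb : b ∈ Icc (0:ℝ) 1)
    (h : phiInt ε a ≤ phiInt ε b) : a ≤ b := by
  by_contra hc
  push_neg at hc
  exact absurd h (not_le.mpr (phiInt_lt ε hε hpos hb.1 hc ha.2))

lemma phiInt_zero (ε : ℝ → ℝ) : phiInt ε 0 = 0 := by
  simp [phiInt]

/-- Characteristic curves remain in the triangle (unnamed lemma in Appendix A,
case i = 2).  `ψ₁, ψ₂, ψ₃` are the inverses of `φ₁, φ₂, φ₃ = φ₁ + φ₂`. -/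
theorem characteristic_curve_in_triangle_case2
    (ε₁ ε₂ : ℝ → ℝ)
    (hε₁ : ContinuousOn ε₁ (Icc 0 1)) (hε₂ : ContinuousOn ε₂ (Icc 0 1))
    (hε₁pos : ∀ x ∈ Icc (0:ℝ) 1, 0 < ε₁ x) (hε₂pos : ∀ x ∈ Icc (0:ℝ) 1, 0 < ε₂ x)
    (ψ₁ ψ₂ ψ₃ : ℝ → ℝ)
    (hψ₁ : ∀ x ∈ Icc (0:ℝ) 1, ψ₁ (phiInt ε₁ x) = x)
    (hψ₁' : ∀ s ∈ Icc (0:ℝ) (phiInt ε₁ 1), ψ₁ s ∈ Icc (0:ℝ) 1 ∧ phiInt ε₁ (ψ₁ s) = s)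
    (hψ₂ : ∀ x ∈ Icc (0:ℝ) 1, ψ₂ (phiInt ε₂ x) = x)
    (hψ₂' : ∀ s ∈ Icc (0:ℝ) (phiInt ε₂ 1), ψ₂ s ∈ Icc (0:ℝ) 1 ∧ phiInt ε₂ (ψ₂ s) = s)
    (hψ₃ : ∀ x ∈ Icc (0:ℝ) 1, ψ₃ (phiInt ε₁ x + phiInt ε₂ x) = x)
    (hψ₃' : ∀ s ∈ Icc (0:ℝ) (phiInt ε₁ 1 + phiInt ε₂ 1),
      ψ₃ s ∈ Icc (0:ℝ) 1 ∧ phiInt ε₁ (ψ₃ s) + phiInt ε₂ (ψ₃ s) = s)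
    (x ξ : ℝ) (hξ0 : 0 ≤ ξ) (hξx : ξ ≤ x) (hx1 : x ≤ 1) :
    0 ≤ phiInt ε₁ x - phiInt ε₁ (ψ₃ (phiInt ε₁ x + phiInt ε₂ ξ)) ∧
    ∀ s : ℝ, 0 ≤ s →
      s ≤ phiInt ε₁ x - phiInt ε₁ (ψ₃ (phiInt ε₁ x + phiInt ε₂ ξ)) →
      0 ≤ ψ₂ (phiInt ε₂ (ψ₃ (phiInt ε₁ x + phiInt ε₂ ξ)) - s) ∧
      ψ₂ (phiInt ε₂ (ψ₃ (phiInt ε₁ x + phiInt ε₂ ξ)) - s) ≤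
        ψ₁ (phiInt ε₁ (ψ₃ (phiInt ε₁ x + phiInt ε₂ ξ)) + s) ∧
      ψ₁ (phiInt ε₁ (ψ₃ (phiInt ε₁ x + phiInt ε₂ ξ)) + s) ≤ x ∧
      ξ ≤ ψ₂ (phiInt ε₂ (ψ₃ (phiInt ε₁ x + phiInt ε₂ ξ)) - s) := by
  have hxI : x ∈ Icc (0:ℝ) 1 := ⟨hξ0.trans hξx, hx1⟩
  have hξI : ξ ∈ Icc (0:ℝ) 1 := ⟨hξ0, hξx.trans hx1⟩
  have h1x0 : 0 ≤ phiInt ε₁ x := by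
    have := phiInt_mono ε₁ hε₁ hε₁pos le_rfl hxI.1 hxI.2
    rwa [phiInt_zero] at this
  have h2ξ0 : 0 ≤ phiInt ε₂ ξ := by
    have := phiInt_mono ε₂ hε₂ hε₂pos le_rfl hξI.1 hξI.2
    rwa [phiInt_zero] at this
  have h1x1 : phiInt ε₁ x ≤ phiInt ε₁ 1 := phiInt_mono ε₁ hε₁ hε₁pos hxI.1 hxI.2 le_rfl
  have h2ξ1 : phiInt ε₂ ξ ≤ phiInt ε₂ 1 := phiInt_mono ε₂ hε₂ hε₂pos hξI.1 hξI.2 le_rfl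
  have hmem : phiInt ε₁ x + phiInt ε₂ ξ ∈ Icc (0:ℝ) (phiInt ε₁ 1 + phiInt ε₂ 1) :=
    ⟨by linarith, by linarith⟩
  obtain ⟨hzI, hzeq⟩ := hψ₃' _ hmem
  set z := ψ₃ (phiInt ε₁ x + phiInt ε₂ ξ) with hz
  -- z ≤ x
  have hzx : z ≤ x := by
    by_contra hc
    push_neg at hc
    have h1 : phiInt ε₁ x < phiInt ε₁ z := phiInt_lt ε₁ hε₁ hε₁pos hxI.1 hc hzI.2
    have h2 : phiInt ε₂ ξ ≤ phiInt ε₂ z :=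
      phiInt_mono ε₂ hε₂ hε₂pos hξI.1 (hξx.trans hc.le) hzI.2
    linarith
  have hξz : ξ ≤ z := by
    by_contra hc
    push_neg at hc
    have h1 : phiInt ε₂ z < phiInt ε₂ ξ := phiInt_lt ε₂ hε₂ hε₂pos hzI.1 hc hξI.2
    have h2 : phiInt ε₁ z ≤ phiInt ε₁ x :=
      phiInt_mono ε₁ hε₁ hε₁pos hzI.1 ((hc.le.trans hξx)) hxI.2
    linarith
  have h1zx : phiInt ε₁ z ≤ phiInt ε₁ x := phiInt_mono ε₁ hε₁ hε₁pos hzI.1 hzx hxI.2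
  refine ⟨by linarith, fun s hs0 hsF => ?_⟩
  -- φ₂ ξ ≤ φ₂ z and the key identity
  have hid : phiInt ε₁ x - phiInt ε₁ z = phiInt ε₂ z - phiInt ε₂ ξ := by linarith
  have h1z0 : 0 ≤ phiInt ε₁ z := by
    have := phiInt_mono ε₁ hε₁ hε₁pos le_rfl hzI.1 hzI.2
    rwa [phiInt_zero] at this
  -- a := ψ₁ (φ₁ z + s)
  have hamem : phiInt ε₁ z + s ∈ Icc (0:ℝ) (phiInt ε₁ 1) := ⟨by linarith, by linarith⟩
  obtain ⟨haI, haeq⟩ := hψ₁' _ hamem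
  -- b := ψ₂ (φ₂ z − s)
  have hbmem : phiInt ε₂ z - s ∈ Icc (0:ℝ) (phiInt ε₂ 1) := by
    constructor
    · linarith
    · have : phiInt ε₂ z ≤ phiInt ε₂ 1 := phiInt_mono ε₂ hε₂ hε₂pos hzI.1 hzI.2 le_rfl
      linarith
  obtain ⟨hbI, hbeq⟩ := hψ₂' _ hbmem
  set a := ψ₁ (phiInt ε₁ z + s)
  set b := ψ₂ (phiInt ε₂ z - s)
  have hax : a ≤ x := by
    apply phiInt_le_rev ε₁ hε₁ hε₁pos haI hxI
    rw [haeq]; linarith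
  have hza : z ≤ a := by
    apply phiInt_le_rev ε₁ hε₁ hε₁pos hzI haI
    rw [haeq]; linarith
  have hξb : ξ ≤ b := by
    apply phiInt_le_rev ε₂ hε₂ hε₂pos hξI hbI
    rw [hbeq]; linarith
  have hbz : b ≤ z := by
    apply phiInt_le_rev ε₂ hε₂ hε₂pos hbI hzI
    rw [hbeq]; linarith
  exact ⟨hξ0.trans hξb, hbz.trans hza, hax, hξb⟩
end

section
/- Integral estimate along the first characteristic (Lemma A.3, case i = 1): For every integer n ≥ 1 and every (x,ξ) ∈ T, ∫₀^{φ₁(ξ)} [ φ₁⁻¹( φ₁(x) − φ₁(ξ) + s ) ]ⁿ ds ≤ K_ε x^{n+1}/(n+1), where K_ε := max_{x∈[0,1]} max{ 1/ε₁(x), 1/ε₂(x) }. -/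
open MeasureTheory Set

/-- Integral estimate along the first characteristic (Lemma A.3, case i = 1):
`∫₀^{φ₁(ξ)} [φ₁⁻¹(φ₁(x) − φ₁(ξ) + s)]ⁿ ds ≤ K_ε xⁿ⁺¹/(n+1)` with
`K_ε = max_{[0,1]} max(1/ε₁, 1/ε₂)`.  `ψ₁` is the inverse of `φ₁`. -/
theorem characteristic_integral_estimate_case1
    (ε₁ ε₂ : ℝ → ℝ)
    (hε₁ : ContinuousOn ε₁ (Icc 0 1)) (hε₂ : ContinuousOn ε₂ (Icc 0 1))
    (hε₁pos : ∀ x ∈ Icc (0:ℝ) 1, 0 < ε₁ x) (hε₂pos : ∀ x ∈ Icc (0:ℝ) 1, 0 < ε₂ x)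
    (ψ₁ : ℝ → ℝ)
    (hψ₁ : ∀ x ∈ Icc (0:ℝ) 1, ψ₁ (phiInt ε₁ x) = x)
    (hψ₁' : ∀ s ∈ Icc (0:ℝ) (phiInt ε₁ 1), ψ₁ s ∈ Icc (0:ℝ) 1 ∧ phiInt ε₁ (ψ₁ s) = s) :
    ∀ n : ℕ, 1 ≤ n → ∀ x ξ : ℝ, 0 ≤ ξ → ξ ≤ x → x ≤ 1 →
      (∫ s in (0:ℝ)..(phiInt ε₁ ξ), (ψ₁ (phiInt ε₁ x - phiInt ε₁ ξ + s)) ^ n) ≤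
        (⨆ y : Icc (0:ℝ) 1, max (1 / ε₁ y) (1 / ε₂ y)) * x ^ (n + 1) / (n + 1) := by
  intro n hn x ξ hξ0 hξx hx1
  have hx0 : (0:ℝ) ≤ x := le_trans hξ0 hξx
  have hxmem : x ∈ Icc (0:ℝ) 1 := ⟨hx0, hx1⟩
  have hξmem : ξ ∈ Icc (0:ℝ) 1 := ⟨hξ0, le_trans hξx hx1⟩
  -- the clamp function
  set cl : ℝ → ℝ := fun z => max 0 (min 1 z) with hcl
  have hclcont : Continuous cl := continuous_const.max (continuous_const.min continuous_id)
  have hclmem : ∀ z, cl z ∈ Icc (0:ℝ) 1 := fun z =>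
    ⟨le_max_left _ _, max_le zero_le_one (min_le_left _ _)⟩
  have hclid : ∀ z ∈ Icc (0:ℝ) 1, cl z = z := fun z hz => by
    rw [hcl]; dsimp only; rw [min_eq_right hz.2, max_eq_right hz.1]
  -- globally continuous positive extension of 1/ε₁
  set g : ℝ → ℝ := fun z => 1 / ε₁ (cl z) with hgdef
  have hgpos : ∀ z, 0 < g z := fun z => by
    have := hε₁pos _ (hclmem z); positivity
  have hgcont : Continuous g := by
    have h1 : Continuous fun z => ε₁ (cl z) := hε₁.comp_continuous hclcont hclmem
    exact continuous_const.div h1 (fun z => (hε₁pos _ (hclmem z)).ne')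
  have hgeq : ∀ z ∈ Icc (0:ℝ) 1, g z = 1 / ε₁ z := fun z hz => by
    rw [hgdef]; simp only []; rw [hclid z hz]
  set F : ℝ → ℝ := fun u => ∫ t in (0:ℝ)..u, g t with hFdef
  have hFderiv : ∀ u : ℝ, HasDerivAt F (g u) u := fun u =>
    (hgcont.integral_hasStrictDerivAt 0 u).hasDerivAt
  have hFmono : StrictMono F := strictMono_of_hasDerivAt_pos hFderiv hgpos
  have hFcont : Continuous F :=
    continuous_iff_continuousAt.2 fun u => (hFderiv u).continuousAt
  -- F agrees with phiInt ε₁ on [0,1]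
  have hFeq : ∀ u ∈ Icc (0:ℝ) 1, phiInt ε₁ u = F u := fun u hu => by
    unfold phiInt
    rw [hFdef]
    refine intervalIntegral.integral_congr fun z hz => ?_
    rw [uIcc_of_le hu.1] at hz
    exact (hgeq z ⟨hz.1, hz.2.trans hu.2⟩).symm
  have hF0 : F 0 = 0 := intervalIntegral.integral_same
  -- surjectivity of F
  have hFsurj : Function.Surjective F := by
    have htop : Filter.Tendsto F Filter.atTop Filter.atTop := by
      have hline : Filter.Tendsto (fun u : ℝ => F 1 + (u - 1) * g 1)
          Filter.atTop Filter.atTop := by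
        apply Filter.tendsto_atTop_add_const_left
        exact (Filter.tendsto_atTop_add_const_right _ (-1) Filter.tendsto_id).atTop_mul_const
          (hgpos 1)
      refine Filter.tendsto_atTop_mono' _ ?_ hline
      filter_upwards [Filter.eventually_ge_atTop (1:ℝ)] with u hu
      have hadd := intervalIntegral.integral_add_adjacent_intervals
        (hgcont.intervalIntegrable (μ := volume) 0 1) (hgcont.intervalIntegrable (μ := volume) 1 u)
      have hconst : (∫ t in (1:ℝ)..u, g t) = (u - 1) * g 1 := by
        have heq1 : ∀ t ∈ uIcc (1:ℝ) u, g t = g 1 := by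
          intro t ht
          rw [uIcc_of_le hu] at ht
          have hclt : cl t = 1 := by
            rw [hcl]; dsimp only; rw [min_eq_left ht.1, max_eq_right (zero_le_one : (0:ℝ) ≤ 1)]
          have hcl1 : cl 1 = 1 := hclid 1 (right_mem_Icc.2 zero_le_one)
          rw [hgdef]; dsimp only; rw [hclt, hcl1]
        rw [intervalIntegral.integral_congr heq1, intervalIntegral.integral_const, smul_eq_mul]
      have hFu : F u = (∫ t in (0:ℝ)..1, g t) + ∫ t in (1:ℝ)..u, g t := by
        rw [hFdef]; dsimp only; rw [hadd]
      have hF1 : F 1 = ∫ t in (0:ℝ)..1, g t := rfl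
      rw [hFu, hF1, hconst]
    have hbot : Filter.Tendsto F Filter.atBot Filter.atBot := by
      have hline : Filter.Tendsto (fun u : ℝ => F 0 + u * g 0) Filter.atBot Filter.atBot := by
        apply Filter.tendsto_atBot_add_const_left
        exact Filter.Tendsto.atBot_mul_const (hgpos 0) Filter.tendsto_id
      refine Filter.tendsto_atBot_mono' _ ?_ hline
      filter_upwards [Filter.eventually_le_atBot (0:ℝ)] with u hu
      have hconst : (∫ t in (0:ℝ)..u, g t) = (u - 0) * g 0 := by
        have heq0 : ∀ t ∈ uIcc (0:ℝ) u, g t = g 0 := by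
          intro t ht
          rw [uIcc_of_ge hu] at ht
          have hclt : cl t = 0 := by
            rw [hcl]; dsimp only
            rw [min_eq_right (ht.2.trans zero_le_one), max_eq_left ht.2]
          have hcl0 : cl 0 = 0 := hclid 0 (left_mem_Icc.2 zero_le_one)
          rw [hgdef]; dsimp only; rw [hclt, hcl0]
        rw [intervalIntegral.integral_congr heq0, intervalIntegral.integral_const, smul_eq_mul]
      have hFu : F u = (u - 0) * g 0 := by rw [hFdef]; dsimp only; rw [hconst]
      rw [hFu, hF0]
      nlinarith [hgpos 0]
    exact Continuous.surjective hFcont htop hbot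
  -- inverse order iso, continuity of ψ₁
  set e := StrictMono.orderIsoOfSurjective F hFmono hFsurj with he
  have hψcont : ContinuousOn ψ₁ (Icc 0 (F 1)) := by
    have hsymm : Continuous (e.symm : ℝ → ℝ) := OrderIso.continuous _
    refine hsymm.continuousOn.congr fun t ht => ?_
    have ht' : t ∈ Icc 0 (phiInt ε₁ 1) := by
      rwa [hFeq 1 (right_mem_Icc.2 zero_le_one)]
    obtain ⟨hmem, heq⟩ := hψ₁' t ht'
    have : F (ψ₁ t) = t := by rw [← hFeq _ hmem, heq]
    calc ψ₁ t = e.symm (F (ψ₁ t)) := by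
            rw [he]; exact (StrictMono.orderIsoOfSurjective_symm_apply_self _ _ _ _).symm
      _ = e.symm t := by rw [this]
  have hψnn : ∀ t ∈ Icc 0 (F 1), 0 ≤ ψ₁ t := fun t ht => by
    have ht' : t ∈ Icc 0 (phiInt ε₁ 1) := by
      rwa [hFeq 1 (right_mem_Icc.2 zero_le_one)]
    exact (hψ₁' t ht').1.1
  -- rewrite phiInt into F
  rw [hFeq ξ hξmem, hFeq x hxmem]
  have hFξ0 : 0 ≤ F ξ := by rw [← hF0]; exact hFmono.monotone hξ0
  have hFxξ : F ξ ≤ F x := hFmono.monotone hξx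
  have hFx1 : F x ≤ F 1 := hFmono.monotone hx1
  set d : ℝ := F x - F ξ with hd
  have hd0 : 0 ≤ d := by simp [hd]; linarith
  have hdFx : d ≤ F x := by simp [hd]; linarith
  -- Step 1: shift
  have step1 : (∫ s in (0:ℝ)..(F ξ), (ψ₁ (F x - F ξ + s)) ^ n)
      = ∫ t in d..(F x), (ψ₁ t) ^ n := by
    rw [← hd]
    have := intervalIntegral.integral_comp_add_left (a := (0:ℝ)) (b := F ξ)
      (fun t => (ψ₁ t) ^ n) d
    rw [this]
    congr 1 <;> [skip; ring]
    ring
  rw [step1]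
  -- continuity/integrability of ψ₁^n
  have hpowcont : ContinuousOn (fun t => (ψ₁ t) ^ n) (Icc 0 (F 1)) := hψcont.pow n
  have hint1 : IntervalIntegrable (fun t => (ψ₁ t) ^ n) volume 0 d := by
    apply ContinuousOn.intervalIntegrable
    apply hpowcont.mono
    rw [uIcc_of_le hd0]
    exact Icc_subset_Icc le_rfl (hdFx.trans hFx1)
  have hint2 : IntervalIntegrable (fun t => (ψ₁ t) ^ n) volume d (F x) := by
    apply ContinuousOn.intervalIntegrable
    apply hpowcont.mono
    rw [uIcc_of_le hdFx]
    exact Icc_subset_Icc hd0 hFx1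
  -- Step 2: enlarge domain to [0, F x]
  have step2 : (∫ t in d..(F x), (ψ₁ t) ^ n) ≤ ∫ t in (0:ℝ)..(F x), (ψ₁ t) ^ n := by
    have hsplit := intervalIntegral.integral_add_adjacent_intervals hint1 hint2
    have hnn : 0 ≤ ∫ t in (0:ℝ)..d, (ψ₁ t) ^ n := by
      apply intervalIntegral.integral_nonneg hd0
      intro t ht
      exact pow_nonneg (hψnn t ⟨ht.1, ht.2.trans (hdFx.trans hFx1)⟩) n
    linarith [hsplit]
  refine step2.trans ?_
  -- Step 3: substitution t = F u
  have step3 : (∫ t in (0:ℝ)..(F x), (ψ₁ t) ^ n)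
      = ∫ u in (0:ℝ)..x, g u • ((fun t => (ψ₁ t) ^ n) ∘ F) u := by
    have hsub := intervalIntegral.integral_comp_smul_deriv' (f := F) (f' := g)
      (g := fun t => (ψ₁ t) ^ n) (a := (0:ℝ)) (b := x)
      (fun u _ => hFderiv u) hgcont.continuousOn ?_
    · rw [hF0] at hsub; exact hsub.symm
    refine hpowcont.mono ?_
    rintro t ⟨u, hu, rfl⟩
    rw [uIcc_of_le hx0] at hu
    constructor
    · rw [← hF0]; exact hFmono.monotone hu.1
    · exact hFmono.monotone (hu.2.trans hx1)
  rw [step3]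
  -- Step 4: rewrite integrand on [0, x]
  have step4 : (∫ u in (0:ℝ)..x, g u • ((fun t => (ψ₁ t) ^ n) ∘ F) u)
      = ∫ u in (0:ℝ)..x, (1 / ε₁ u) * u ^ n := by
    refine intervalIntegral.integral_congr fun u hu => ?_
    rw [uIcc_of_le hx0] at hu
    have humem : u ∈ Icc (0:ℝ) 1 := ⟨hu.1, hu.2.trans hx1⟩
    have : ψ₁ (F u) = u := by rw [← hFeq u humem]; exact hψ₁ u humem
    simp [Function.comp, this, hgeq u humem, smul_eq_mul]
  rw [step4]
  -- the sup bound
  set K : ℝ := ⨆ y : Icc (0:ℝ) 1, max (1 / ε₁ y) (1 / ε₂ y) with hK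
  have hmaxcont : ContinuousOn (fun y => max (1 / ε₁ y) (1 / ε₂ y)) (Icc 0 1) := by
    refine ContinuousOn.sup ?_ ?_
    · exact ContinuousOn.div continuousOn_const hε₁ fun y hy => (hε₁pos y hy).ne'
    · exact ContinuousOn.div continuousOn_const hε₂ fun y hy => (hε₂pos y hy).ne'
  have hbdd : BddAbove (Set.range fun y : Icc (0:ℝ) 1 => max (1 / ε₁ y) (1 / ε₂ y)) := by
    obtain ⟨C, hC⟩ := (isCompact_Icc.image_of_continuousOn hmaxcont).bddAbove
    refine ⟨C, ?_⟩
    rintro z ⟨⟨y, hy⟩, rfl⟩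
    exact hC ⟨y, hy, rfl⟩
  have hKle : ∀ u ∈ Icc (0:ℝ) 1, 1 / ε₁ u ≤ K := fun u hu =>
    le_trans (le_max_left _ _) (le_ciSup hbdd ⟨u, hu⟩)
  -- Step 5: pointwise bound
  have step5 : (∫ u in (0:ℝ)..x, (1 / ε₁ u) * u ^ n) ≤ ∫ u in (0:ℝ)..x, K * u ^ n := by
    apply intervalIntegral.integral_mono_on hx0
    · refine ContinuousOn.intervalIntegrable ?_
      rw [uIcc_of_le hx0]
      refine ContinuousOn.mul ?_ (continuousOn_pow n)
      refine ContinuousOn.div continuousOn_const (hε₁.mono ?_) fun y hy => (hε₁pos y ?_).ne'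
      · exact Icc_subset_Icc le_rfl hx1
      · exact ⟨hy.1, hy.2.trans hx1⟩
    · exact (continuous_const.mul (continuous_pow n)).intervalIntegrable _ _
    · intro u hu
      have humem : u ∈ Icc (0:ℝ) 1 := ⟨hu.1, hu.2.trans hx1⟩
      exact mul_le_mul_of_nonneg_right (hKle u humem) (pow_nonneg hu.1 n)
  refine step5.trans ?_
  rw [intervalIntegral.integral_const_mul, integral_pow]
  rw [mul_div_assoc]
  gcongr
  · have : 0 ≤ (1:ℝ) / ε₁ 0 := le_of_lt (by have := hε₁pos 0 (left_mem_Icc.2 zero_le_one); positivity)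
    exact this.trans (hKle 0 (left_mem_Icc.2 zero_le_one))
  · push_cast
    norm_num
end

section
/- Induction step for the successive approximation bounds (Lemma A.4, representative case j = 2): Let C_{2i} ∈ C(T) for i = 1, ..., 4, set C̄_{2i} := max_{(x,ξ)∈T} |C_{2i}(x,ξ)|, and let C̄ > 0 satisfy Σ_{i=1}^4 C̄_{2i} ≤ C̄. Let n ≥ 0 be an integer, M ≥ 0, and let F = (F¹, ..., F⁴) : T → ℝ⁴ be continuous with |Fⁱ(x,ξ)| ≤ M C̄ⁿ K_εⁿ xⁿ / n! for all i and all (x,ξ) ∈ T. Then for all (x,ξ) ∈ T, | Σ_{i=1}^4 ∫₀^{s₂^F(x,ξ)} C_{2i}(x₂(x,ξ,s), ξ₂(x,ξ,s)) Fⁱ(x₂(x,ξ,s), ξ₂(x,ξ,s)) ds | ≤ M C̄^{n+1} K_ε^{n+1} x^{n+1} / (n+1)!. -/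
open MeasureTheory Set

/-- `K_ε = max_{x∈[0,1]} max(1/ε₁(x), 1/ε₂(x))`. -/
noncomputable def Keps (ε₁ ε₂ : ℝ → ℝ) : ℝ :=
  ⨆ y : Icc (0:ℝ) 1, max (1 / ε₁ y) (1 / ε₂ y)

/-- The triangular domain T = {(x,ξ) : 0 ≤ ξ ≤ x ≤ 1}. -/
def Tri : Set (ℝ × ℝ) := {p | 0 ≤ p.2 ∧ p.2 ≤ p.1 ∧ p.1 ≤ 1}

namespace SuccAux

noncomputable def ext01 (ε : ℝ → ℝ) : ℝ → ℝ := fun t => ε (max 0 (min 1 t))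

lemma ext01_cont {ε : ℝ → ℝ} (h : ContinuousOn ε (Icc 0 1)) : Continuous (ext01 ε) := by
  apply h.comp_continuous
  · exact continuous_const.max (continuous_const.min continuous_id)
  · intro t
    exact ⟨le_max_left _ _, max_le zero_le_one (min_le_left _ _)⟩

lemma ext01_mem (t : ℝ) : max 0 (min 1 t) ∈ Icc (0:ℝ) 1 :=
  ⟨le_max_left _ _, max_le zero_le_one (min_le_left _ _)⟩

lemma ext01_pos {ε : ℝ → ℝ} (h : ∀ x ∈ Icc (0:ℝ) 1, 0 < ε x) (t : ℝ) : 0 < ext01 ε t :=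
  h _ (ext01_mem t)

lemma ext01_eq {ε : ℝ → ℝ} {t : ℝ} (ht : t ∈ Icc (0:ℝ) 1) : ext01 ε t = ε t := by
  unfold ext01
  rw [min_eq_right ht.2, max_eq_right ht.1]

lemma phiInt_ext_eq {ε : ℝ → ℝ} {x : ℝ} (hx : x ∈ Icc (0:ℝ) 1) :
    phiInt ε x = phiInt (ext01 ε) x := by
  refine intervalIntegral.integral_congr fun t ht => ?_
  rw [uIcc_of_le hx.1] at ht
  rw [ext01_eq ⟨ht.1, ht.2.trans hx.2⟩]

lemma phiInt_hasDerivAt {E : ℝ → ℝ} (hE : Continuous E) (hpos : ∀ t, 0 < E t) (t : ℝ) :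
    HasDerivAt (phiInt E) (1 / E t) t := by
  have hc : Continuous fun z => 1 / E z := continuous_const.div hE fun z => (hpos z).ne'
  exact intervalIntegral.integral_hasDerivAt_right (hc.intervalIntegrable _ _)
    (hc.stronglyMeasurableAtFilter _ _) hc.continuousAt

lemma phiInt_strictMono {E : ℝ → ℝ} (hE : Continuous E) (hpos : ∀ t, 0 < E t) :
    StrictMono (phiInt E) :=
  strictMono_of_hasDerivAt_pos (phiInt_hasDerivAt hE hpos)
    (fun t => by have := hpos t; positivity)

lemma phiInt_continuous {E : ℝ → ℝ} (hE : Continuous E) (hpos : ∀ t, 0 < E t) :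
    Continuous (phiInt E) :=
  continuous_iff_continuousAt.2 fun t => (phiInt_hasDerivAt hE hpos t).continuousAt

lemma phiInt_zero (E : ℝ → ℝ) : phiInt E 0 = 0 := intervalIntegral.integral_same

/-- Continuity of the inverse function on `[0, Φ 1]`. -/
lemma psi_contOn {Φ ψ : ℝ → ℝ} (hΦc : Continuous Φ) (hΦ0 : Φ 0 = 0)
    (hΦmono : Monotone Φ)
    (hψ : ∀ x ∈ Icc (0:ℝ) 1, ψ (Φ x) = x)
    (hψ' : ∀ s ∈ Icc (0:ℝ) (Φ 1), ψ s ∈ Icc (0:ℝ) 1 ∧ Φ (ψ s) = s) :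
    ContinuousOn ψ (Icc 0 (Φ 1)) := by
  have hmaps : ∀ x : Icc (0:ℝ) 1, Φ x ∈ Icc (0:ℝ) (Φ 1) := fun x =>
    ⟨le_trans (le_of_eq hΦ0.symm) (hΦmono x.2.1), hΦmono x.2.2⟩
  let e : Icc (0:ℝ) 1 ≃ Icc (0:ℝ) (Φ 1) :=
    { toFun := fun x => ⟨Φ x, hmaps x⟩
      invFun := fun s => ⟨ψ s, (hψ' s s.2).1⟩
      left_inv := fun x => Subtype.ext (hψ x x.2)
      right_inv := fun s => Subtype.ext ((hψ' s s.2).2) }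
  have hec : Continuous e := Continuous.subtype_mk (hΦc.comp continuous_subtype_val) _
  have h : Continuous fun s : Icc (0:ℝ) (Φ 1) => ψ s := by
    have := (hec.homeoOfEquivCompactToT2 (f := e)).symm.continuous
    exact continuous_subtype_val.comp this
  rw [continuousOn_iff_continuous_restrict]
  exact h

lemma tri_compact : IsCompact Tri := by
  have hclosed : IsClosed Tri := by
    have : Tri = {p : ℝ × ℝ | 0 ≤ p.2} ∩ ({p | p.2 ≤ p.1} ∩ {p | p.1 ≤ 1}) := by
      ext p; simp [Tri, and_assoc]
    rw [this]
    exact (isClosed_le continuous_const continuous_snd).inter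
      ((isClosed_le continuous_snd continuous_fst).inter
        (isClosed_le continuous_fst continuous_const))
  refine IsCompact.of_isClosed_subset (isCompact_Icc (a := ((0:ℝ), (0:ℝ))) (b := (1, 1)))
    hclosed ?_
  rintro ⟨a, b⟩ ⟨h1, h2, h3⟩
  exact ⟨⟨h1.trans h2, h1⟩, ⟨h3, h2.trans h3⟩⟩

end SuccAux

/-- Induction step for the successive approximation bounds (Lemma A.4,
representative case j = 2).  `ψ₁, ψ₂, ψ₃` are the inverses of
`φ₁, φ₂, φ₃ = φ₁ + φ₂`; with `z = ψ₃(φ₁ x + φ₂ ξ)`, the second characteristic is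
`x₂(s) = ψ₁(φ₁ z + s)`, `ξ₂(s) = ψ₂(φ₂ z − s)`, `s₂^F = φ₁ x − φ₁ z`. -/
theorem successive_approximation_induction_step_case2
    (ε₁ ε₂ : ℝ → ℝ)
    (hε₁ : ContinuousOn ε₁ (Icc 0 1)) (hε₂ : ContinuousOn ε₂ (Icc 0 1))
    (hε₁pos : ∀ x ∈ Icc (0:ℝ) 1, 0 < ε₁ x) (hε₂pos : ∀ x ∈ Icc (0:ℝ) 1, 0 < ε₂ x)
    (ψ₁ ψ₂ ψ₃ : ℝ → ℝ)
    (hψ₁ : ∀ x ∈ Icc (0:ℝ) 1, ψ₁ (phiInt ε₁ x) = x)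
    (hψ₁' : ∀ s ∈ Icc (0:ℝ) (phiInt ε₁ 1), ψ₁ s ∈ Icc (0:ℝ) 1 ∧ phiInt ε₁ (ψ₁ s) = s)
    (hψ₂ : ∀ x ∈ Icc (0:ℝ) 1, ψ₂ (phiInt ε₂ x) = x)
    (hψ₂' : ∀ s ∈ Icc (0:ℝ) (phiInt ε₂ 1), ψ₂ s ∈ Icc (0:ℝ) 1 ∧ phiInt ε₂ (ψ₂ s) = s)
    (hψ₃ : ∀ x ∈ Icc (0:ℝ) 1, ψ₃ (phiInt ε₁ x + phiInt ε₂ x) = x)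
    (hψ₃' : ∀ s ∈ Icc (0:ℝ) (phiInt ε₁ 1 + phiInt ε₂ 1),
      ψ₃ s ∈ Icc (0:ℝ) 1 ∧ phiInt ε₁ (ψ₃ s) + phiInt ε₂ (ψ₃ s) = s)
    (C₂ : Fin 4 → ℝ → ℝ → ℝ)
    (hC₂ : ∀ i, ContinuousOn (fun p : ℝ × ℝ => C₂ i p.1 p.2) Tri)
    (Cbar : ℝ) (hCbar : 0 < Cbar)
    (hCbarle : (∑ i : Fin 4, ⨆ p : Tri, |C₂ i (p : ℝ × ℝ).1 (p : ℝ × ℝ).2|) ≤ Cbar)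
    (n : ℕ) (M : ℝ) (hM : 0 ≤ M)
    (F : ℝ → ℝ → Fin 4 → ℝ)
    (hFcont : ∀ i, ContinuousOn (fun p : ℝ × ℝ => F p.1 p.2 i) Tri)
    (hFbound : ∀ i, ∀ x ξ : ℝ, 0 ≤ ξ → ξ ≤ x → x ≤ 1 →
      |F x ξ i| ≤ M * Cbar ^ n * Keps ε₁ ε₂ ^ n * x ^ n / (Nat.factorial n)) :
    ∀ x ξ : ℝ, 0 ≤ ξ → ξ ≤ x → x ≤ 1 →
      |∑ i : Fin 4, ∫ s in
          (0:ℝ)..(phiInt ε₁ x - phiInt ε₁ (ψ₃ (phiInt ε₁ x + phiInt ε₂ ξ))),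
          C₂ i (ψ₁ (phiInt ε₁ (ψ₃ (phiInt ε₁ x + phiInt ε₂ ξ)) + s))
              (ψ₂ (phiInt ε₂ (ψ₃ (phiInt ε₁ x + phiInt ε₂ ξ)) - s)) *
            F (ψ₁ (phiInt ε₁ (ψ₃ (phiInt ε₁ x + phiInt ε₂ ξ)) + s))
              (ψ₂ (phiInt ε₂ (ψ₃ (phiInt ε₁ x + phiInt ε₂ ξ)) - s)) i| ≤
        M * Cbar ^ (n + 1) * Keps ε₁ ε₂ ^ (n + 1) * x ^ (n + 1) /
          (Nat.factorial (n + 1)) := by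
  have h0I : (0:ℝ) ∈ Icc (0:ℝ) 1 := ⟨le_refl 0, zero_le_one⟩
  have h1I : (1:ℝ) ∈ Icc (0:ℝ) 1 := ⟨zero_le_one, le_refl 1⟩
  have hE₁c : Continuous (SuccAux.ext01 ε₁) := SuccAux.ext01_cont hε₁
  have hE₂c : Continuous (SuccAux.ext01 ε₂) := SuccAux.ext01_cont hε₂
  have hE₁p : ∀ t, 0 < SuccAux.ext01 ε₁ t := SuccAux.ext01_pos hε₁pos
  have hE₂p : ∀ t, 0 < SuccAux.ext01 ε₂ t := SuccAux.ext01_pos hε₂pos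
  set Φ₁ := phiInt (SuccAux.ext01 ε₁) with hΦ₁def
  set Φ₂ := phiInt (SuccAux.ext01 ε₂) with hΦ₂def
  have heq₁ : ∀ x ∈ Icc (0:ℝ) 1, phiInt ε₁ x = Φ₁ x := fun x hx => SuccAux.phiInt_ext_eq hx
  have heq₂ : ∀ x ∈ Icc (0:ℝ) 1, phiInt ε₂ x = Φ₂ x := fun x hx => SuccAux.phiInt_ext_eq hx
  have hΦ₁m : StrictMono Φ₁ := SuccAux.phiInt_strictMono hE₁c hE₁p
  have hΦ₂m : StrictMono Φ₂ := SuccAux.phiInt_strictMono hE₂c hE₂p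
  have hΦ₁c : Continuous Φ₁ := SuccAux.phiInt_continuous hE₁c hE₁p
  have hΦ₂c : Continuous Φ₂ := SuccAux.phiInt_continuous hE₂c hE₂p
  have hΦ₁0 : Φ₁ 0 = 0 := SuccAux.phiInt_zero _
  have hΦ₂0 : Φ₂ 0 = 0 := SuccAux.phiInt_zero _
  -- K bounds
  set K := Keps ε₁ ε₂ with hKdef
  have hKbdd : BddAbove (Set.range fun y : Icc (0:ℝ) 1 => max (1 / ε₁ y) (1 / ε₂ y)) := by
    have himg : BddAbove ((fun y => max (1 / ε₁ y) (1 / ε₂ y)) '' Icc (0:ℝ) 1) := by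
      refine (isCompact_Icc.image_of_continuousOn ?_).bddAbove
      exact (continuousOn_const.div hε₁ fun y hy => (hε₁pos y hy).ne').sup
        (continuousOn_const.div hε₂ fun y hy => (hε₂pos y hy).ne')
    rwa [Set.image_eq_range] at himg
  have hK₁ : ∀ u ∈ Icc (0:ℝ) 1, 1 / ε₁ u ≤ K := fun u hu =>
    le_trans (le_max_left _ _) (le_ciSup hKbdd ⟨u, hu⟩)
  have hKpos : 0 < K :=
    lt_of_lt_of_le (one_div_pos.2 (hε₁pos 0 h0I)) (hK₁ 0 h0I)
  have hK0 : 0 ≤ K := hKpos.le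
  -- inverse functions in Φ-form
  have hψ₁Φ : ∀ x ∈ Icc (0:ℝ) 1, ψ₁ (Φ₁ x) = x := fun x hx => by
    rw [← heq₁ x hx]; exact hψ₁ x hx
  have hψ₂Φ : ∀ x ∈ Icc (0:ℝ) 1, ψ₂ (Φ₂ x) = x := fun x hx => by
    rw [← heq₂ x hx]; exact hψ₂ x hx
  have hψ₁Φ' : ∀ s ∈ Icc (0:ℝ) (Φ₁ 1), ψ₁ s ∈ Icc (0:ℝ) 1 ∧ Φ₁ (ψ₁ s) = s := fun s hs => by
    rw [← heq₁ 1 h1I] at hs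
    obtain ⟨h1, h2⟩ := hψ₁' s hs
    exact ⟨h1, by rw [← heq₁ _ h1]; exact h2⟩
  have hψ₂Φ' : ∀ s ∈ Icc (0:ℝ) (Φ₂ 1), ψ₂ s ∈ Icc (0:ℝ) 1 ∧ Φ₂ (ψ₂ s) = s := fun s hs => by
    rw [← heq₂ 1 h1I] at hs
    obtain ⟨h1, h2⟩ := hψ₂' s hs
    exact ⟨h1, by rw [← heq₂ _ h1]; exact h2⟩
  have hψ₃Φ' : ∀ s ∈ Icc (0:ℝ) (Φ₁ 1 + Φ₂ 1),
      ψ₃ s ∈ Icc (0:ℝ) 1 ∧ Φ₁ (ψ₃ s) + Φ₂ (ψ₃ s) = s := fun s hs => by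
    rw [← heq₁ 1 h1I, ← heq₂ 1 h1I] at hs
    obtain ⟨h1, h2⟩ := hψ₃' s hs
    exact ⟨h1, by rw [← heq₁ _ h1, ← heq₂ _ h1]; exact h2⟩
  have hψ₁cont : ContinuousOn ψ₁ (Icc 0 (Φ₁ 1)) :=
    SuccAux.psi_contOn hΦ₁c hΦ₁0 hΦ₁m.monotone hψ₁Φ hψ₁Φ'
  have hψ₂cont : ContinuousOn ψ₂ (Icc 0 (Φ₂ 1)) :=
    SuccAux.psi_contOn hΦ₂c hΦ₂0 hΦ₂m.monotone hψ₂Φ hψ₂Φ'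
  -- C̄ bounds
  have hCbdd : ∀ i : Fin 4,
      BddAbove (Set.range fun p : Tri => |C₂ i (p : ℝ × ℝ).1 (p : ℝ × ℝ).2|) := fun i => by
    have himg : BddAbove ((fun p : ℝ × ℝ => |C₂ i p.1 p.2|) '' Tri) :=
      (SuccAux.tri_compact.image_of_continuousOn (hC₂ i).abs).bddAbove
    rwa [Set.image_eq_range] at himg
  have hCb : ∀ i : Fin 4, ∀ p ∈ Tri,
      |C₂ i p.1 p.2| ≤ ⨆ q : Tri, |C₂ i (q : ℝ × ℝ).1 (q : ℝ × ℝ).2| :=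
    fun i p hp => le_ciSup (hCbdd i) ⟨p, hp⟩
  have h00Tri : ((0:ℝ), (0:ℝ)) ∈ Tri := ⟨le_refl 0, le_refl 0, zero_le_one⟩
  have hCbnn : ∀ i : Fin 4, 0 ≤ ⨆ q : Tri, |C₂ i (q : ℝ × ℝ).1 (q : ℝ × ℝ).2| :=
    fun i => le_trans (abs_nonneg _) (hCb i _ h00Tri)
  intro x ξ hξ0 hξx hx1
  have hx0 : (0:ℝ) ≤ x := hξ0.trans hξx
  have hxI : x ∈ Icc (0:ℝ) 1 := ⟨hx0, hx1⟩
  have hξI : ξ ∈ Icc (0:ℝ) 1 := ⟨hξ0, hξx.trans hx1⟩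
  rw [heq₁ x hxI, heq₂ ξ hξI]
  set z := ψ₃ (Φ₁ x + Φ₂ ξ) with hzdef
  have haI : Φ₁ x + Φ₂ ξ ∈ Icc (0:ℝ) (Φ₁ 1 + Φ₂ 1) := by
    constructor
    · have h1 : Φ₁ 0 ≤ Φ₁ x := hΦ₁m.monotone hx0
      have h2 : Φ₂ 0 ≤ Φ₂ ξ := hΦ₂m.monotone hξ0
      rw [hΦ₁0] at h1; rw [hΦ₂0] at h2; linarith
    · exact add_le_add (hΦ₁m.monotone hx1) (hΦ₂m.monotone (hξx.trans hx1))
  obtain ⟨hzI, hzsum⟩ := hψ₃Φ' _ haI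
  rw [heq₁ z hzI, heq₂ z hzI]
  have hz0 : 0 ≤ z := hzI.1
  have hzx : z ≤ x := by
    by_contra h
    push_neg at h
    have h1 : Φ₁ x < Φ₁ z := hΦ₁m h
    have h2 : Φ₂ ξ < Φ₂ z := hΦ₂m (lt_of_le_of_lt hξx h)
    linarith
  set S := Φ₁ x - Φ₁ z with hSdef
  have hS0 : 0 ≤ S := sub_nonneg.2 (hΦ₁m.monotone hzx)
  have hΦ₂ξ0 : 0 ≤ Φ₂ ξ := by
    have := hΦ₂m.monotone hξ0; rw [hΦ₂0] at this; exact this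
  have hΦ₁z0 : 0 ≤ Φ₁ z := by
    have := hΦ₁m.monotone hz0; rw [hΦ₁0] at this; exact this
  have hSΦ₂ : S = Φ₂ z - Φ₂ ξ := by rw [hSdef]; linarith
  have hcurve : ∀ s ∈ Icc (0:ℝ) S,
      (Φ₁ z + s ∈ Icc (0:ℝ) (Φ₁ 1)) ∧ (Φ₂ z - s ∈ Icc (0:ℝ) (Φ₂ 1)) := by
    intro s hs
    have hs1 := hs.1
    have hs2 := hs.2
    have hΦ₁1 : Φ₁ x ≤ Φ₁ 1 := hΦ₁m.monotone hx1
    have hΦ₂1 : Φ₂ z ≤ Φ₂ 1 := hΦ₂m.monotone hzI.2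
    constructor
    · constructor
      · linarith
      · have : Φ₁ z + s ≤ Φ₁ x := by rw [hSdef] at hs2; linarith
        linarith
    · constructor
      · rw [hSΦ₂] at hs2; linarith
      · linarith
  have hpt : ∀ s ∈ Icc (0:ℝ) S,
      ψ₁ (Φ₁ z + s) ∈ Icc (0:ℝ) 1 ∧ ψ₂ (Φ₂ z - s) ∈ Icc (0:ℝ) 1 ∧
      0 ≤ ψ₂ (Φ₂ z - s) ∧ ψ₂ (Φ₂ z - s) ≤ ψ₁ (Φ₁ z + s) ∧ ψ₁ (Φ₁ z + s) ≤ x := by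
    intro s hs
    obtain ⟨h1, h2⟩ := hcurve s hs
    obtain ⟨hx₂I, hx₂eq⟩ := hψ₁Φ' _ h1
    obtain ⟨hξ₂I, hξ₂eq⟩ := hψ₂Φ' _ h2
    have hx₂z : z ≤ ψ₁ (Φ₁ z + s) := by
      have hle : Φ₁ z ≤ Φ₁ (ψ₁ (Φ₁ z + s)) := by rw [hx₂eq]; linarith [hs.1]
      exact hΦ₁m.le_iff_le.1 hle
    have hξ₂z : ψ₂ (Φ₂ z - s) ≤ z := by
      have hle : Φ₂ (ψ₂ (Φ₂ z - s)) ≤ Φ₂ z := by rw [hξ₂eq]; linarith [hs.1]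
      exact hΦ₂m.le_iff_le.1 hle
    have hx₂x : ψ₁ (Φ₁ z + s) ≤ x := by
      have hle : Φ₁ (ψ₁ (Φ₁ z + s)) ≤ Φ₁ x := by
        rw [hx₂eq]
        have hs2 := hs.2
        rw [hSdef] at hs2
        linarith
      exact hΦ₁m.le_iff_le.1 hle
    exact ⟨hx₂I, hξ₂I, hξ₂I.1, hξ₂z.trans hx₂z, hx₂x⟩
  have hγ1 : ContinuousOn (fun s => ψ₁ (Φ₁ z + s)) (Icc 0 S) :=
    hψ₁cont.comp (continuous_const.add continuous_id).continuousOn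
      (fun s hs => (hcurve s hs).1)
  have hγ2 : ContinuousOn (fun s => ψ₂ (Φ₂ z - s)) (Icc 0 S) :=
    hψ₂cont.comp (continuous_const.sub continuous_id).continuousOn
      (fun s hs => (hcurve s hs).2)
  have hγ : ContinuousOn (fun s => (ψ₁ (Φ₁ z + s), ψ₂ (Φ₂ z - s))) (Icc 0 S) := hγ1.prodMk hγ2
  have hγTri : ∀ s ∈ Icc (0:ℝ) S, (ψ₁ (Φ₁ z + s), ψ₂ (Φ₂ z - s)) ∈ Tri := fun s hs => by
    obtain ⟨hA, hB, hh1, hh2, hh3⟩ := hpt s hs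
    exact ⟨hh1, hh2, hh3.trans hx1⟩
  -- the key integral computation
  have hinvE₁cont : Continuous (fun u => 1 / SuccAux.ext01 ε₁ u) :=
    continuous_const.div hE₁c fun u => (hE₁p u).ne'
  have hsub : (∫ u in z..x, (1 / SuccAux.ext01 ε₁ u) • ((fun t => ψ₁ t ^ n) ∘ Φ₁) u)
      = ∫ t in Φ₁ z..Φ₁ x, ψ₁ t ^ n := by
    apply intervalIntegral.integral_comp_smul_deriv'
    · exact fun u _ => SuccAux.phiInt_hasDerivAt hE₁c hE₁p u
    · exact hinvE₁cont.continuousOn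
    · refine (hψ₁cont.pow n).mono ?_
      rintro t ⟨u, hu, rfl⟩
      rw [uIcc_of_le hzx] at hu
      have huI : u ∈ Icc (0:ℝ) 1 := ⟨hz0.trans hu.1, hu.2.trans hx1⟩
      constructor
      · have := hΦ₁m.monotone huI.1; rw [hΦ₁0] at this; exact this
      · exact hΦ₁m.monotone huI.2
  have hcompadd : (∫ s in (0:ℝ)..S, ψ₁ (Φ₁ z + s) ^ n) = ∫ t in Φ₁ z..Φ₁ z + S, ψ₁ t ^ n := by
    simpa using intervalIntegral.integral_comp_add_left
      (a := (0:ℝ)) (b := S) (fun t => ψ₁ t ^ n) (Φ₁ z)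
  have hJeq : (∫ s in (0:ℝ)..S, ψ₁ (Φ₁ z + s) ^ n)
      = ∫ u in z..x, (1 / SuccAux.ext01 ε₁ u) * u ^ n := by
    rw [hcompadd, show Φ₁ z + S = Φ₁ x by rw [hSdef]; ring, ← hsub]
    apply intervalIntegral.integral_congr
    intro u hu
    rw [uIcc_of_le hzx] at hu
    have huI : u ∈ Icc (0:ℝ) 1 := ⟨hz0.trans hu.1, hu.2.trans hx1⟩
    simp only [Function.comp_apply, smul_eq_mul]
    rw [hψ₁Φ u huI]
  have hJle : (∫ u in z..x, (1 / SuccAux.ext01 ε₁ u) * u ^ n)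
      ≤ K * x ^ (n + 1) / ((n : ℝ) + 1) := by
    have hint1 : IntervalIntegrable (fun u => (1 / SuccAux.ext01 ε₁ u) * u ^ n) volume z x :=
      (hinvE₁cont.mul (continuous_pow n)).intervalIntegrable _ _
    have hint2 : IntervalIntegrable (fun u => K * u ^ n) volume z x :=
      (continuous_const.mul (continuous_pow n)).intervalIntegrable _ _
    calc (∫ u in z..x, (1 / SuccAux.ext01 ε₁ u) * u ^ n)
        ≤ ∫ u in z..x, K * u ^ n := by
          refine intervalIntegral.integral_mono_on hzx hint1 hint2 fun u hu => ?_
          have huI : u ∈ Icc (0:ℝ) 1 := ⟨hz0.trans hu.1, hu.2.trans hx1⟩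
          refine mul_le_mul_of_nonneg_right ?_ (pow_nonneg huI.1 n)
          rw [SuccAux.ext01_eq huI]
          exact hK₁ u huI
      _ = K * ((x ^ (n + 1) - z ^ (n + 1)) / ((n : ℝ) + 1)) := by
          rw [intervalIntegral.integral_const_mul, integral_pow]
      _ ≤ K * x ^ (n + 1) / ((n : ℝ) + 1) := by
          rw [mul_div_assoc]
          refine mul_le_mul_of_nonneg_left ?_ hK0
          have hzp : (0:ℝ) ≤ z ^ (n + 1) := pow_nonneg hz0 _
          have hd : (0:ℝ) < (n : ℝ) + 1 := by positivity
          apply div_le_div_of_nonneg_right ?_ hd.le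
          linarith
  have hJle' : (∫ s in (0:ℝ)..S, ψ₁ (Φ₁ z + s) ^ n) ≤ K * x ^ (n + 1) / ((n : ℝ) + 1) := by
    rw [hJeq]; exact hJle
  have hc0 : 0 ≤ M * Cbar ^ n * K ^ n / (n.factorial : ℝ) :=
    div_nonneg (mul_nonneg (mul_nonneg hM (pow_nonneg hCbar.le n)) (pow_nonneg hK0 n))
      (Nat.cast_nonneg _)
  have hQ0 : 0 ≤ K * x ^ (n + 1) / ((n : ℝ) + 1) :=
    div_nonneg (mul_nonneg hK0 (pow_nonneg hx0 _)) (by positivity)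
  have huIcc : uIcc (0:ℝ) S = Icc 0 S := uIcc_of_le hS0
  have hibound : ∀ i : Fin 4,
      |∫ s in (0:ℝ)..S,
          C₂ i (ψ₁ (Φ₁ z + s)) (ψ₂ (Φ₂ z - s)) * F (ψ₁ (Φ₁ z + s)) (ψ₂ (Φ₂ z - s)) i|
        ≤ (⨆ q : Tri, |C₂ i (q : ℝ × ℝ).1 (q : ℝ × ℝ).2|) *
            ((M * Cbar ^ n * K ^ n / (n.factorial : ℝ)) *
              (K * x ^ (n + 1) / ((n : ℝ) + 1))) := by
    intro i
    have hCcont : ContinuousOn (fun s => C₂ i (ψ₁ (Φ₁ z + s)) (ψ₂ (Φ₂ z - s))) (Icc 0 S) :=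
      (hC₂ i).comp hγ hγTri
    have hFc : ContinuousOn (fun s => F (ψ₁ (Φ₁ z + s)) (ψ₂ (Φ₂ z - s)) i) (Icc 0 S) :=
      (hFcont i).comp hγ hγTri
    have hfc : ContinuousOn (fun s => C₂ i (ψ₁ (Φ₁ z + s)) (ψ₂ (Φ₂ z - s)) *
        F (ψ₁ (Φ₁ z + s)) (ψ₂ (Φ₂ z - s)) i) (Icc 0 S) := hCcont.mul hFc
    have hint1 : IntervalIntegrable (fun s => |C₂ i (ψ₁ (Φ₁ z + s)) (ψ₂ (Φ₂ z - s)) *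
        F (ψ₁ (Φ₁ z + s)) (ψ₂ (Φ₂ z - s)) i|) volume 0 S := by
      apply ContinuousOn.intervalIntegrable
      rw [huIcc]
      exact hfc.abs
    have hint2 : IntervalIntegrable (fun s =>
        (⨆ q : Tri, |C₂ i (q : ℝ × ℝ).1 (q : ℝ × ℝ).2|) *
          (M * Cbar ^ n * K ^ n / (n.factorial : ℝ)) * ψ₁ (Φ₁ z + s) ^ n) volume 0 S := by
      apply ContinuousOn.intervalIntegrable
      rw [huIcc]
      exact continuousOn_const.mul (hγ1.pow n)
    have hptb : ∀ s ∈ Icc (0:ℝ) S,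
        |C₂ i (ψ₁ (Φ₁ z + s)) (ψ₂ (Φ₂ z - s)) * F (ψ₁ (Φ₁ z + s)) (ψ₂ (Φ₂ z - s)) i|
          ≤ (⨆ q : Tri, |C₂ i (q : ℝ × ℝ).1 (q : ℝ × ℝ).2|) *
              (M * Cbar ^ n * K ^ n / (n.factorial : ℝ)) * ψ₁ (Φ₁ z + s) ^ n := by
      intro s hs
      obtain ⟨hAI, hBI, hh1, hh2, hh3⟩ := hpt s hs
      rw [abs_mul]
      have hCle : |C₂ i (ψ₁ (Φ₁ z + s)) (ψ₂ (Φ₂ z - s))|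
          ≤ ⨆ q : Tri, |C₂ i (q : ℝ × ℝ).1 (q : ℝ × ℝ).2| :=
        hCb i (ψ₁ (Φ₁ z + s), ψ₂ (Φ₂ z - s)) (hγTri s hs)
      have hFle := hFbound i _ _ hh1 hh2 (hh3.trans hx1)
      calc |C₂ i (ψ₁ (Φ₁ z + s)) (ψ₂ (Φ₂ z - s))| * |F (ψ₁ (Φ₁ z + s)) (ψ₂ (Φ₂ z - s)) i|
          ≤ (⨆ q : Tri, |C₂ i (q : ℝ × ℝ).1 (q : ℝ × ℝ).2|) *
              (M * Cbar ^ n * K ^ n * ψ₁ (Φ₁ z + s) ^ n / (n.factorial : ℝ)) :=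
            mul_le_mul hCle hFle (abs_nonneg _) (hCbnn i)
        _ = (⨆ q : Tri, |C₂ i (q : ℝ × ℝ).1 (q : ℝ × ℝ).2|) *
              (M * Cbar ^ n * K ^ n / (n.factorial : ℝ)) * ψ₁ (Φ₁ z + s) ^ n := by ring
    calc |∫ s in (0:ℝ)..S,
          C₂ i (ψ₁ (Φ₁ z + s)) (ψ₂ (Φ₂ z - s)) * F (ψ₁ (Φ₁ z + s)) (ψ₂ (Φ₂ z - s)) i|
        ≤ ∫ s in (0:ℝ)..S,
            |C₂ i (ψ₁ (Φ₁ z + s)) (ψ₂ (Φ₂ z - s)) * F (ψ₁ (Φ₁ z + s)) (ψ₂ (Φ₂ z - s)) i| :=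
          intervalIntegral.abs_integral_le_integral_abs hS0
      _ ≤ ∫ s in (0:ℝ)..S,
            (⨆ q : Tri, |C₂ i (q : ℝ × ℝ).1 (q : ℝ × ℝ).2|) *
              (M * Cbar ^ n * K ^ n / (n.factorial : ℝ)) * ψ₁ (Φ₁ z + s) ^ n :=
          intervalIntegral.integral_mono_on hS0 hint1 hint2 hptb
      _ = (⨆ q : Tri, |C₂ i (q : ℝ × ℝ).1 (q : ℝ × ℝ).2|) *
            (M * Cbar ^ n * K ^ n / (n.factorial : ℝ)) *
            ∫ s in (0:ℝ)..S, ψ₁ (Φ₁ z + s) ^ n :=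
          intervalIntegral.integral_const_mul _ _
      _ ≤ (⨆ q : Tri, |C₂ i (q : ℝ × ℝ).1 (q : ℝ × ℝ).2|) *
            (M * Cbar ^ n * K ^ n / (n.factorial : ℝ)) * (K * x ^ (n + 1) / ((n : ℝ) + 1)) :=
          mul_le_mul_of_nonneg_left hJle' (mul_nonneg (hCbnn i) hc0)
      _ = (⨆ q : Tri, |C₂ i (q : ℝ × ℝ).1 (q : ℝ × ℝ).2|) *
            ((M * Cbar ^ n * K ^ n / (n.factorial : ℝ)) *
              (K * x ^ (n + 1) / ((n : ℝ) + 1))) := by ring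
  have hQ0' : 0 ≤ (M * Cbar ^ n * K ^ n / (n.factorial : ℝ)) *
      (K * x ^ (n + 1) / ((n : ℝ) + 1)) := mul_nonneg hc0 hQ0
  calc |∑ i : Fin 4, ∫ s in (0:ℝ)..S,
        C₂ i (ψ₁ (Φ₁ z + s)) (ψ₂ (Φ₂ z - s)) * F (ψ₁ (Φ₁ z + s)) (ψ₂ (Φ₂ z - s)) i|
      ≤ ∑ i : Fin 4, |∫ s in (0:ℝ)..S,
          C₂ i (ψ₁ (Φ₁ z + s)) (ψ₂ (Φ₂ z - s)) * F (ψ₁ (Φ₁ z + s)) (ψ₂ (Φ₂ z - s)) i| :=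
        Finset.abs_sum_le_sum_abs _ _
    _ ≤ ∑ i : Fin 4, (⨆ q : Tri, |C₂ i (q : ℝ × ℝ).1 (q : ℝ × ℝ).2|) *
          ((M * Cbar ^ n * K ^ n / (n.factorial : ℝ)) *
            (K * x ^ (n + 1) / ((n : ℝ) + 1))) :=
        Finset.sum_le_sum fun i _ => hibound i
    _ = (∑ i : Fin 4, ⨆ q : Tri, |C₂ i (q : ℝ × ℝ).1 (q : ℝ × ℝ).2|) *
          ((M * Cbar ^ n * K ^ n / (n.factorial : ℝ)) *
            (K * x ^ (n + 1) / ((n : ℝ) + 1))) := by rw [Finset.sum_mul]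
    _ ≤ Cbar * ((M * Cbar ^ n * K ^ n / (n.factorial : ℝ)) *
          (K * x ^ (n + 1) / ((n : ℝ) + 1))) :=
        mul_le_mul_of_nonneg_right hCbarle hQ0'
    _ = M * Cbar ^ (n + 1) * K ^ (n + 1) * x ^ (n + 1) / (Nat.factorial (n + 1)) := by
        rw [Nat.factorial_succ]
        have hfac : ((n.factorial : ℝ)) ≠ 0 := Nat.cast_ne_zero.2 n.factorial_ne_zero
        have hn1 : ((n : ℝ) + 1) ≠ 0 := by positivity
        push_cast
        field_simp
        ring
end
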